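/- arXiv:1804.01851 — 2 statements merged into one kernel-verified Lean document; each statement's English description precedes it below -/
import Mathlib

section
/- Let S, S̃ be subspaces of ℝ^n of equal dimension. Then sign(S) ⊆ cl(sign(S̃)) if and only if sign(S⊥) ⊆ cl(sign(S̃⊥)). -/
open scoped BigOperators

noncomputable section

/-- The generalized exponential map `F_c(x) = ∑ i, c_i exp(w̃^i · x) w^i`. -/
def Fmap {d dt n : ℕ} (W : Matrix (Fin d) (Fin n) ℝ) (Wt : Matrix (Fin dt) (Fin n) ℝ)
    (c : Fin n → ℝ) (x : Fin dt → ℝ) : Fin d → ℝ :=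
  fun i => ∑ j, c j * Real.exp (∑ k, Wt k j * x k) * W i j

/-- The polyhedral cone generated by the columns of `W`. -/
def coneOf {d n : ℕ} (W : Matrix (Fin d) (Fin n) ℝ) : Set (Fin d → ℝ) :=
  {y | ∃ u : Fin n → ℝ, (∀ j, 0 ≤ u j) ∧ y = fun i => ∑ j, u j * W i j}

/-- The componentwise sign vector. -/
def signVec {n : ℕ} (x : Fin n → ℝ) : Fin n → SignType := fun i => SignType.sign (x i)

/-- The set of sign vectors of a set of real vectors. -/
def signSet {n : ℕ} (T : Set (Fin n → ℝ)) : Set (Fin n → SignType) := signVec '' T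

/-- The kernel of (the linear map given by) a matrix, as a set. -/
def kerSet {d n : ℕ} (W : Matrix (Fin d) (Fin n) ℝ) : Set (Fin n → ℝ) :=
  {x | W.mulVec x = 0}

/-- The orthogonal complement (w.r.t. the standard inner product) of a set in `ℝ^n`. -/
def orthSet {n : ℕ} (T : Set (Fin n → ℝ)) : Set (Fin n → ℝ) :=
  {v | ∀ u ∈ T, ∑ i, u i * v i = 0}

/-- The partial order on sign vectors: `τ ≤ ρ` iff for each `i`, `τ i = 0` or `τ i = ρ i`. -/
def sleq {n : ℕ} (τ ρ : Fin n → SignType) : Prop := ∀ i, τ i = 0 ∨ τ i = ρ i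

/-- The (lower) closure of a set of sign vectors. -/
def clSV {n : ℕ} (T : Set (Fin n → SignType)) : Set (Fin n → SignType) :=
  {τ | ∃ ρ ∈ T, sleq τ ρ}

set_option maxHeartbeats 1000000
set_option synthInstance.maxHeartbeats 200000
open scoped RealInnerProductSpace

namespace Stmt15Aux

variable {n : ℕ}

local notation "E" => EuclideanSpace ℝ (Fin n)


lemma sign_disj_iff {a b : ℝ} :
    (SignType.sign a = 0 ∨ SignType.sign a = SignType.sign b) ↔ (a = 0 ∨ 0 < a * b) := by
  rcases lt_trichotomy a 0 with ha|ha|ha <;> rcases lt_trichotomy b 0 with hb|hb|hb <;>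
    simp_all [sign_pos, sign_neg, mul_pos_of_neg_of_neg, mul_pos,
      mul_pos_iff, asymm, ne_of_lt, ne_of_gt]

lemma sign_eq_mul_pos {a b : ℝ} (ha : a ≠ 0) (h : SignType.sign a = SignType.sign b) :
    0 < a * b := by
  have := (sign_disj_iff (a := a) (b := b)).mp (Or.inr h)
  tauto

/-- transitivity-like: if `0 < t*a` and `sign a = sign b` then `0 < t*b`. -/
lemma pos_trans_sign {t a b : ℝ} (h : 0 < t * a) (hs : SignType.sign a = SignType.sign b) :
    0 < t * b := by
  have ha : a ≠ 0 := by rintro rfl; simp at h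
  have hab : 0 < a * b := sign_eq_mul_pos ha hs
  rcases mul_pos_iff.mp h with ⟨h1, h2⟩ | ⟨h1, h2⟩ <;>
    rcases mul_pos_iff.mp hab with ⟨g1, g2⟩ | ⟨g1, g2⟩ <;> nlinarith





lemma abs_coord_le_norm (x : E) (i : Fin n) : |x i| ≤ ‖x‖ := by
  have h := EuclideanSpace.norm_eq x
  rw [h]
  have : |x i| = Real.sqrt (‖x i‖^2) := by
    rw [Real.sqrt_sq_eq_abs]; simp
  rw [this]
  apply Real.sqrt_le_sqrt
  exact Finset.single_le_sum (f := fun j => ‖x j‖^2) (fun j _ => by positivity) (Finset.mem_univ i)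

lemma inner_eq_sum (x y : E) : ⟪x, y⟫ = ∑ i, x i * y i := by
  simp [PiLp.inner_apply, RCLike.inner_apply, mul_comm]

/-- diagonal scaling as a linear equivalence -/
def scaleE (a : Fin n → ℝ) (ha : ∀ i, a i ≠ 0) : E ≃ₗ[ℝ] E where
  toFun x := WithLp.toLp 2 (fun i => a i * x i)
  invFun y := WithLp.toLp 2 (fun i => (a i)⁻¹ * y i)
  map_add' x y := by ext i; simp [mul_add]
  map_smul' c x := by ext i; simp [smul_eq_mul]; ring
  left_inv x := by ext i; exact inv_mul_cancel_left₀ (ha i) (x i)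
  right_inv y := by ext i; exact mul_inv_cancel_left₀ (ha i) (y i)

@[simp] lemma scaleE_apply (a : Fin n → ℝ) (ha : ∀ i, a i ≠ 0) (x : E) (i : Fin n) :
    scaleE a ha x i = a i * x i := rfl





/-- orthogonal projection as endomorphism -/
def projL (K : Submodule ℝ E) : E →L[ℝ] E :=
  K.subtypeL.comp (K.orthogonalProjectionOnto)

lemma projL_apply (K : Submodule ℝ E) (x : E) :
    projL K x = (K.orthogonalProjectionOnto x : E) := rfl

lemma projL_mem (K : Submodule ℝ E) (x : E) : projL K x ∈ K :=
  (K.orthogonalProjectionOnto x).2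

lemma projL_eq_self (K : Submodule ℝ E) {x : E} (hx : x ∈ K) : projL K x = x :=
  K.starProjection_eq_self_iff.mpr hx

lemma projL_eq_zero_iff (K : Submodule ℝ E) {x : E} : projL K x = 0 ↔ x ∈ Kᗮ := by
  rw [projL_apply]
  constructor
  · intro h
    have : K.orthogonalProjectionOnto x = 0 := Subtype.ext (by simpa using h)
    exact Submodule.orthogonalProjectionOnto_eq_zero_iff.mp this
  · intro h
    rw [Submodule.orthogonalProjectionOnto_eq_zero_iff.mpr h]; rfl

lemma projL_symm (K : Submodule ℝ E) (x y : E) :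
    ⟪projL K x, y⟫ = ⟪x, projL K y⟫ := by
  rw [projL_apply, projL_apply]
  exact Submodule.inner_starProjection_left_eq_right K x y

lemma norm_projL_le (K : Submodule ℝ E) : ‖projL K‖ ≤ 1 := by
  refine ContinuousLinearMap.opNorm_le_bound _ zero_le_one (fun x => ?_)
  rw [one_mul, projL_apply]
  have h1 : ⟪x - (K.orthogonalProjectionOnto x : E), (K.orthogonalProjectionOnto x : E)⟫ = 0 := by
    have h := Submodule.sub_starProjection_mem_orthogonal (K := K) x
    have := h _ (K.orthogonalProjectionOnto x).2
    rw [real_inner_comm] at this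
    exact this
  have h2 : ‖x‖^2 = ‖x - (K.orthogonalProjectionOnto x : E)‖^2 + ‖(K.orthogonalProjectionOnto x : E)‖^2 := by
    have := norm_add_sq_real (x - (K.orthogonalProjectionOnto x : E)) (K.orthogonalProjectionOnto x : E)
    simp only [sub_add_cancel] at this
    rw [this, h1]; ring
  nlinarith [norm_nonneg (x - (K.orthogonalProjectionOnto x : E)),
    norm_nonneg (K.orthogonalProjectionOnto x : E), norm_nonneg x]

/-- trace functional on endomorphisms of Euclidean space -/
def trE (f : EuclideanSpace ℝ (Fin n) →L[ℝ] EuclideanSpace ℝ (Fin n)) : ℝ :=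
  ∑ i, ⟪f (EuclideanSpace.single i 1), EuclideanSpace.single i 1⟫

lemma trE_projL (K : Submodule ℝ E) : trE (projL K) = (Module.finrank ℝ K : ℝ) := by
  classical
  set b := stdOrthonormalBasis ℝ K with hb
  have hproj : ∀ x : E, projL K x = ∑ j, ⟪(b j : E), x⟫ • (b j : E) := by
    intro x
    rw [projL_apply, b.orthogonalProjectionOnto_apply_eq_sum]
    push_cast [Submodule.coe_sum]
    simp
  unfold trE
  have : ∀ i : Fin n, ⟪projL K (EuclideanSpace.single i 1), EuclideanSpace.single i 1⟫
      = ∑ j, ((b j : E) i) * ((b j : E) i) := by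
    intro i
    rw [hproj, sum_inner]
    congr 1; ext j
    rw [real_inner_smul_left]
    have h1 : ⟪(b j : E), EuclideanSpace.single i (1:ℝ)⟫ = (b j : E) i := by
      rw [EuclideanSpace.inner_single_right]; simp
    have h2 : ⟪(b j : E), EuclideanSpace.single i (1:ℝ)⟫
        = ⟪EuclideanSpace.single i (1:ℝ), (b j : E)⟫ := real_inner_comm _ _
    rw [h1]
  rw [Finset.sum_congr rfl (fun i _ => this i), Finset.sum_comm]
  have hone : ∀ j, ∑ i, ((b j : E) i) * ((b j : E) i) = 1 := by
    intro j
    have : ⟪(b j : E), (b j : E)⟫ = ∑ i, ((b j : E) i) * ((b j : E) i) := by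
      exact inner_eq_sum _ _
    rw [← this]
    have hn : ‖(b j : E)‖ = 1 := b.orthonormal.1 j
    rw [real_inner_self_eq_norm_sq, hn]; norm_num
  rw [Finset.sum_congr rfl (fun j _ => hone j)]
  simp


lemma E_sum_apply {ι : Type*} (s : Finset ι) (f : ι → E) (i : Fin n) :
    (∑ j ∈ s, f j) i = ∑ j ∈ s, f j i :=
  map_sum (PiLp.projₗ (𝕜 := ℝ) 2 (fun _ : Fin n => ℝ) i) f s

lemma exists_pos_of_simplex {ι : Type*} [Fintype ι] {lam : ι → ℝ}
    (hlam : lam ∈ stdSimplex ℝ ι) : ∃ j, 0 < lam j := by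
  by_contra hcon
  push_neg at hcon
  have : ∀ j, lam j = 0 := fun j => le_antisymm (hcon j) (hlam.1 j)
  have hsum := hlam.2
  simp [this] at hsum

/-- Gordan-type lemma: if no nonzero element of `Tᗮ` is conformally below `x`,
then some `y ∈ T` has strictly matching signs on the support of `x`. -/
lemma gordan (T : Submodule ℝ E) (x : E)
    (h : ∀ w ∈ Tᗮ, (∀ i, w i = 0 ∨ 0 < w i * x i) → w = 0) :
    ∃ y ∈ T, ∀ i, x i = 0 ∨ 0 < x i * y i := by
  classical
  set s : Finset (Fin n) := Finset.univ.filter (fun i => x i ≠ 0) with hs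
  by_cases hse : s.Nonempty
  swap
  · refine ⟨0, T.zero_mem, fun i => Or.inl ?_⟩
    by_contra hxi
    exact hse ⟨i, by simp [hs, hxi]⟩
  · set g : Fin n → E := fun i => projL T (x i • EuclideanSpace.single i 1) with hg
    set m : ({ i // i ∈ s } → ℝ) →ₗ[ℝ] E :=
      { toFun := fun lam => ∑ j : { i // i ∈ s }, lam j • g j.1
        map_add' := by
          intro u v
          simp [add_smul, Finset.sum_add_distrib]
        map_smul' := by
          intro c u
          simp [smul_smul, Finset.smul_sum] } with hm
    have hm_apply : ∀ lam, m lam = ∑ j : { i // i ∈ s }, lam j • g j.1 := fun _ => rfl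
    set A : Set E := m '' stdSimplex ℝ { i // i ∈ s } with hA
    have hAcomp : IsCompact A := (isCompact_stdSimplex _ _).image m.continuous_of_finiteDimensional
    have hAconv : Convex ℝ A := (convex_stdSimplex ℝ _).linear_image m
    have hAne : A.Nonempty := by
      obtain ⟨i0, hi0⟩ := hse
      refine ⟨m (fun j => if j = ⟨i0, hi0⟩ then 1 else 0), ⟨_, ⟨fun j => by by_cases hj : j = ⟨i0, hi0⟩ <;> simp [hj], by simp⟩, rfl⟩⟩
    have hAT : ∀ a ∈ A, a ∈ T := by
      rintro a ⟨lam, _, rfl⟩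
      rw [hm_apply]
      exact Submodule.sum_mem T (fun j _ => Submodule.smul_mem T _ (projL_mem T _))
    -- coordinates of the combination vector
    have hcoord : ∀ (lam : { i // i ∈ s } → ℝ) (i : Fin n),
        (∑ j : { i // i ∈ s }, lam j • (x j.1 • EuclideanSpace.single j.1 (1:ℝ))) i
          = if hi : i ∈ s then lam ⟨i, hi⟩ * x i else 0 := by
      intro lam i
      have hterm : ∀ j : { i // i ∈ s },
          (lam j • (x j.1 • EuclideanSpace.single j.1 (1:ℝ))) i
            = if i = j.1 then lam j * x i else 0 := by
        intro j
        have : (EuclideanSpace.single j.1 (1:ℝ)) i = if i = j.1 then 1 else 0 :=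
          EuclideanSpace.single_apply j.1 1 i
        simp only [PiLp.smul_apply, this, smul_eq_mul]
        by_cases hij : i = j.1
        · subst hij; simp
        · simp [hij]
      have hsum : (∑ j : { i // i ∈ s }, lam j • (x j.1 • EuclideanSpace.single j.1 (1:ℝ))) i
          = ∑ j : { i // i ∈ s }, (if i = j.1 then lam j * x i else 0) := by
        rw [E_sum_apply]
        exact Finset.sum_congr rfl (fun j _ => hterm j)
      rw [hsum]
      by_cases hi : i ∈ s
      · rw [dif_pos hi, Finset.sum_eq_single ⟨i, hi⟩]
        · simp
        · intro j _ hji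
          have : ¬ (i = j.1) := by
            intro hij; apply hji; exact Subtype.ext hij.symm
          simp [this]
        · intro habs; exact absurd (Finset.mem_univ _) habs
      · rw [dif_neg hi]
        apply Finset.sum_eq_zero
        intro j _
        have : ¬ (i = j.1) := by
          intro hij; rw [hij] at hi; exact hi j.2
        simp [this]
    have h0A : (0 : E) ∉ A := by
      rintro ⟨lam, hlam, hlam0⟩
      set w : E := ∑ j : { i // i ∈ s }, lam j • (x j.1 • EuclideanSpace.single j.1 (1:ℝ)) with hw
      have hwT : w ∈ Tᗮ := by
        rw [← projL_eq_zero_iff]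
        have : projL T w = ∑ j : { i // i ∈ s }, lam j • g j.1 := by
          rw [hw, map_sum]
          exact Finset.sum_congr rfl (fun j _ => by rw [map_smul])
        rw [this, ← hm_apply, hlam0]
      have hwconf : ∀ i, w i = 0 ∨ 0 < w i * x i := by
        intro i
        rw [hw, hcoord lam i]
        by_cases hi : i ∈ s
        · rcases eq_or_lt_of_le (hlam.1 ⟨i, hi⟩) with heq | hpos
          · left; simp [hi, ← heq]
          · right
            have hxi : x i ≠ 0 := by simpa [hs] using hi
            simp only [hi, dif_pos]
            have : 0 < x i * x i := mul_self_pos.mpr hxi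
            nlinarith
        · left; simp [hi]
      have hw0 := h w hwT hwconf
      obtain ⟨j0, hj0⟩ := exists_pos_of_simplex hlam
      have : w j0.1 = lam j0 * x j0.1 := by rw [hw, hcoord]; simp [j0.2]
      rw [hw0] at this
      have hxj0 : x j0.1 ≠ 0 := by
        exact (Finset.mem_filter.mp j0.2).2
      have : lam j0 * x j0.1 = 0 := by simpa using this.symm
      rcases mul_eq_zero.mp this with h1 | h2
      · exact absurd h1 (ne_of_gt hj0)
      · exact hxj0 h2
    -- minimal norm point
    obtain ⟨c, hcA, hcmin⟩ := exists_norm_eq_iInf_of_complete_convex hAne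
      (hAcomp.isClosed.isComplete) hAconv (0 : E)
    have hopt : ∀ a ∈ A, ⟪(0:E) - c, a - c⟫ ≤ 0 :=
      (norm_eq_iInf_iff_real_inner_le_zero hAconv hcA).mp hcmin
    have hc0 : c ≠ 0 := fun hceq => h0A (hceq ▸ hcA)
    have hinner : ∀ a ∈ A, ⟪c, a⟫ > 0 := by
      intro a ha
      have h1 := hopt a ha
      have h2 : ⟪c, a⟫ ≥ ⟪c, c⟫ := by
        have : ⟪(0:E) - c, a - c⟫ = -⟪c, a⟫ + ⟪c, c⟫ := by
          rw [zero_sub, inner_neg_left, inner_sub_right]; ring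
        linarith [this ▸ h1]
      have h3 : (0:ℝ) < ⟪c, c⟫ := by
        rw [real_inner_self_eq_norm_mul_norm]
        have : ‖c‖ ≠ 0 := norm_ne_zero_iff.mpr hc0
        positivity
      linarith
    refine ⟨c, hAT c hcA, fun i => ?_⟩
    by_cases hxi : x i = 0
    · exact Or.inl hxi
    · right
      have hi : i ∈ s := by simp [hs, hxi]
      have hgiA : g i ∈ A := by
        refine ⟨(fun j => if j = ⟨i, hi⟩ then 1 else 0), ⟨fun j => by by_cases hj : j = ⟨i, hi⟩ <;> simp [hj], by simp⟩, ?_⟩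
        rw [hm_apply, Finset.sum_eq_single ⟨i, hi⟩]
        · simp
        · intro j _ hji; simp [hji]
        · intro habs; exact absurd (Finset.mem_univ _) habs
      have hpos := hinner _ hgiA
      have hcT : projL T c = c := projL_eq_self T (hAT c hcA)
      have : ⟪c, g i⟫ = x i * c i := by
        rw [hg]
        have h1 : ⟪c, projL T (x i • EuclideanSpace.single i (1:ℝ))⟫
            = ⟪projL T c, x i • EuclideanSpace.single i (1:ℝ)⟫ := (projL_symm T c _).symm
        rw [h1, hcT]
        rw [real_inner_smul_right, EuclideanSpace.inner_single_right]
        simp [mul_comm]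
      rw [this] at hpos
      exact hpos

open Filter Topology in
lemma tendsto_apply_of_tendsto {P : ℕ → (EuclideanSpace ℝ (Fin n) →L[ℝ] EuclideanSpace ℝ (Fin n))}
    {Q : EuclideanSpace ℝ (Fin n) →L[ℝ] EuclideanSpace ℝ (Fin n)}
    (h : Tendsto P atTop (𝓝 Q)) (v : EuclideanSpace ℝ (Fin n)) :
    Tendsto (fun k => P k v) atTop (𝓝 (Q v)) := by
  have hc : Continuous (fun f : EuclideanSpace ℝ (Fin n) →L[ℝ] EuclideanSpace ℝ (Fin n) => f v) :=
    (ContinuousLinearMap.apply ℝ (EuclideanSpace ℝ (Fin n)) v).continuous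
  exact (hc.tendsto Q).comp h

lemma exists_ne_coord {w : E} (hw : w ≠ 0) : ∃ i, w i ≠ 0 := by
  by_contra hcon
  push_neg at hcon
  exact hw (by ext i; simpa using hcon i)

/-- (A) implies (A*) -/
lemma Astar_of_A (S St : Submodule ℝ E)
    (hA : ∀ u ∈ S, ∃ v ∈ St, ∀ i, u i = 0 ∨ 0 < u i * v i) :
    ∀ w ∈ Stᗮ, (∃ u ∈ S, ∀ i, w i = 0 ∨ 0 < w i * u i) → w = 0 := by
  rintro w hw ⟨u, hu, hconf⟩
  by_contra hw0
  obtain ⟨v, hv, huv⟩ := hA u hu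
  have hsum : ∑ i, v i * w i = 0 := by
    have := hw v hv
    rw [inner_eq_sum] at this
    exact this
  have hnn : ∀ i ∈ Finset.univ, (0:ℝ) ≤ v i * w i := by
    intro i _
    rcases hconf i with h0 | hpos
    · simp [h0]
    · have hune : u i ≠ 0 := by
        intro h0; rw [h0] at hpos; simp at hpos
      rcases huv i with h0' | hpos'
      · exact absurd h0' hune
      · nlinarith [mul_pos hpos hpos', mul_self_pos.mpr hune]
  have hall := (Finset.sum_eq_zero_iff_of_nonneg hnn).mp hsum
  obtain ⟨i0, hi0⟩ := exists_ne_coord hw0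
  rcases hconf i0 with h0 | hpos
  · exact hi0 h0
  · have hune : u i0 ≠ 0 := by intro h0; rw [h0] at hpos; simp at hpos
    rcases huv i0 with h0' | hpos'
    · exact absurd h0' hune
    · have : (0:ℝ) < v i0 * w i0 := by nlinarith [mul_pos hpos hpos', mul_self_pos.mpr hune]
      have := hall i0 (Finset.mem_univ i0)
      linarith

lemma close_sign {t b : ℝ} (h : |b - t| < |t|) : 0 < t * b := by
  rcases abs_lt.mp h with ⟨h1, h2⟩
  rcases lt_trichotomy t 0 with ht|ht|ht
  · rw [abs_of_neg ht] at h1 h2; nlinarith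
  · exfalso; rw [ht] at h; simp only [sub_zero, abs_zero] at h
    exact absurd h (not_lt.mpr (abs_nonneg b))
  · rw [abs_of_pos ht] at h1 h2; nlinarith

open Filter Topology in
lemma mainCore (S St : Submodule ℝ E)
    (hdim : Module.finrank ℝ S = Module.finrank ℝ St)
    (hAs : ∀ w ∈ Stᗮ, (∃ u ∈ S, ∀ i, w i = 0 ∨ 0 < w i * u i) → w = 0)
    {y x : E} (hy : y ∈ St) (hx : x ∈ Sᗮ) (hconf : ∀ i, y i = 0 ∨ 0 < y i * x i) :
    y = 0 := by
  classical
  set a : ℕ → Fin n → ℝ := fun k i => if y i ≠ 0 then y i / x i else ((k:ℝ)+1)⁻¹ with ha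
  have hapos : ∀ k i, 0 < a k i := by
    intro k i
    rw [ha]; dsimp only
    by_cases hyi : y i ≠ 0
    · rw [if_pos hyi]
      rcases hconf i with h|h
      · exact absurd h hyi
      · rcases mul_pos_iff.mp h with ⟨h1,h2⟩|⟨h1,h2⟩
        · exact div_pos h1 h2
        · exact div_pos_of_neg_of_neg h1 h2
    · rw [if_neg hyi]; positivity
  have hane : ∀ k i, (a k i) ≠ 0 := fun k i => ne_of_gt (hapos k i)
  have hainvne : ∀ k i, ((a k i)⁻¹ : ℝ) ≠ 0 := fun k i => inv_ne_zero (hane k i)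
  set V : ℕ → Submodule ℝ E := fun k =>
    S.map ((scaleE (fun i => (a k i)⁻¹) (hainvne k)).toLinearMap) with hV
  have hVrank : ∀ k, Module.finrank ℝ (V k) = Module.finrank ℝ S := fun k =>
    LinearEquiv.finrank_map_eq _ _
  set x' : E := WithLp.toLp 2 (fun i => if y i ≠ 0 then 0 else x i : Fin n → ℝ) with hx'
  set z : ℕ → E := fun k => y + ((k:ℝ)+1)⁻¹ • x' with hz
  have hzcoord : ∀ k i, z k i = a k i * x i := by
    intro k i
    rw [hz]; dsimp only
    rw [PiLp.add_apply, PiLp.smul_apply]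
    by_cases hyi : y i ≠ 0
    · have hxi : x i ≠ 0 := by
        rcases hconf i with h|h
        · exact absurd h hyi
        · intro h0; rw [h0, mul_zero] at h; exact lt_irrefl 0 h
      have hx'i : x' i = 0 := by rw [hx']; exact if_pos hyi
      have hai : a k i = y i / x i := by rw [ha]; exact if_pos hyi
      rw [hx'i, hai, smul_zero, add_zero]
      field_simp
    · push_neg at hyi
      have hx'i : x' i = x i := by rw [hx']; exact if_neg (by simpa using hyi)
      have hai : a k i = ((k:ℝ)+1)⁻¹ := by rw [ha]; exact if_neg (by simpa using hyi)
      rw [hx'i, hai, hyi, zero_add, smul_eq_mul]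
  have hzV : ∀ k, z k ∈ (V k)ᗮ := by
    intro k
    rw [Submodule.mem_orthogonal]
    rintro v hv
    obtain ⟨u, hu, rfl⟩ := Submodule.mem_map.mp hv
    rw [inner_eq_sum]
    have hterm : ∀ i, ((scaleE (fun i => (a k i)⁻¹) (hainvne k)).toLinearMap u) i * z k i
        = u i * x i := by
      intro i
      have h1 : ((scaleE (fun i => (a k i)⁻¹) (hainvne k)).toLinearMap u) i
          = (a k i)⁻¹ * u i := rfl
      rw [h1, hzcoord]
      have h2 : (a k i)⁻¹ * u i * (a k i * x i) = u i * x i * ((a k i)⁻¹ * a k i) := by ring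
      rw [h2, inv_mul_cancel₀ (hane k i), mul_one]
    rw [Finset.sum_congr rfl (fun i _ => hterm i)]
    have h0 := (Submodule.mem_orthogonal S x).mp hx u hu
    rw [inner_eq_sum] at h0
    exact h0
  set P : ℕ → (EuclideanSpace ℝ (Fin n) →L[ℝ] EuclideanSpace ℝ (Fin n)) :=
    fun k => projL (V k) with hP
  have hPball : ∀ k, P k ∈ Metric.closedBall (0 : EuclideanSpace ℝ (Fin n) →L[ℝ]
      EuclideanSpace ℝ (Fin n)) 1 := by
    intro k
    rw [Metric.mem_closedBall, dist_zero_right]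
    exact norm_projL_le (V k)
  obtain ⟨Q, hQball, φ, hφ, hPQφ⟩ :=
    (isCompact_closedBall (0 : EuclideanSpace ℝ (Fin n) →L[ℝ]
      EuclideanSpace ℝ (Fin n)) 1).tendsto_subseq hPball
  have hPnorm : ∀ k, ‖P k‖ ≤ 1 := fun k => by
    have := hPball k; rwa [Metric.mem_closedBall, dist_zero_right] at this
  have hzy : Tendsto z atTop (𝓝 y) := by
    rw [hz]
    have h1 : Tendsto (fun k : ℕ => (((k:ℝ)+1)⁻¹ : ℝ)) atTop (𝓝 0) := by
      simpa [one_div] using tendsto_one_div_add_atTop_nhds_zero_nat (𝕜 := ℝ)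
    have h2 : Tendsto (fun k : ℕ => (((k:ℝ)+1)⁻¹ : ℝ) • x') atTop (𝓝 ((0:ℝ) • x')) :=
      h1.smul_const x'
    rw [zero_smul] at h2
    simpa using (tendsto_const_nhds (x := y)).add h2
  have hzyφ : Tendsto (fun k => z (φ k)) atTop (𝓝 y) := hzy.comp hφ.tendsto_atTop
  have hQy : Q y = 0 := by
    have hzero : ∀ k, (P (φ k)) (z (φ k)) = 0 := fun k => (projL_eq_zero_iff _).mpr (hzV (φ k))
    have hten : Tendsto (fun k => (P (φ k)) (z (φ k))) atTop (𝓝 (Q y)) := by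
      rw [tendsto_iff_norm_sub_tendsto_zero]
      apply squeeze_zero (fun k => norm_nonneg _)
        (g := fun k => ‖z (φ k) - y‖ + ‖P (φ k) - Q‖ * ‖y‖)
      · intro k
        have e1 : (P (φ k)) (z (φ k)) - Q y
            = (P (φ k)) (z (φ k) - y) + (P (φ k) - Q) y := by
          rw [map_sub, ContinuousLinearMap.sub_apply]; abel
        rw [e1]
        refine le_trans (norm_add_le _ _) (add_le_add ?_ ?_)
        · refine le_trans (ContinuousLinearMap.le_opNorm _ _) ?_
          have := hPnorm (φ k)
          nlinarith [norm_nonneg (z (φ k) - y)]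
        · exact ContinuousLinearMap.le_opNorm _ _
      · have g1 : Tendsto (fun k => ‖z (φ k) - y‖) atTop (𝓝 0) := by
          rw [← tendsto_iff_norm_sub_tendsto_zero]; exact hzyφ
        have g2 : Tendsto (fun k => ‖P (φ k) - Q‖ * ‖y‖) atTop (𝓝 (0 * ‖y‖)) :=
          Tendsto.mul_const _ (tendsto_iff_norm_sub_tendsto_zero.mp hPQφ)
        rw [zero_mul] at g2
        simpa using g1.add g2
    have hconst : Tendsto (fun k => (P (φ k)) (z (φ k))) atTop
        (𝓝 (0 : EuclideanSpace ℝ (Fin n))) := by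
      simp only [hzero]; exact tendsto_const_nhds
    exact tendsto_nhds_unique hten hconst
  have hQsymm : ∀ v w : EuclideanSpace ℝ (Fin n), ⟪Q v, w⟫ = ⟪v, Q w⟫ := by
    intro v w
    have l1 : Tendsto (fun k => ⟪(P (φ k)) v, w⟫) atTop (𝓝 ⟪Q v, w⟫) :=
      (tendsto_apply_of_tendsto hPQφ v).inner tendsto_const_nhds
    have l2 : Tendsto (fun k => ⟪v, (P (φ k)) w⟫) atTop (𝓝 ⟪v, Q w⟫) :=
      tendsto_const_nhds.inner (tendsto_apply_of_tendsto hPQφ w)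
    have heq : (fun k => ⟪(P (φ k)) v, w⟫) = (fun k => ⟪v, (P (φ k)) w⟫) := by
      funext k; exact projL_symm _ v w
    rw [heq] at l1
    exact tendsto_nhds_unique l1 l2
  have hQidem : ∀ v : EuclideanSpace ℝ (Fin n), Q (Q v) = Q v := by
    intro v
    have hPv : Tendsto (fun k => (P (φ k)) v) atTop (𝓝 (Q v)) := tendsto_apply_of_tendsto hPQφ v
    have hPPv : Tendsto (fun k => (P (φ k)) ((P (φ k)) v)) atTop (𝓝 (Q (Q v))) := by
      rw [tendsto_iff_norm_sub_tendsto_zero]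
      apply squeeze_zero (fun k => norm_nonneg _)
        (g := fun k => ‖(P (φ k)) v - Q v‖ + ‖P (φ k) - Q‖ * ‖Q v‖)
      · intro k
        have e1 : (P (φ k)) ((P (φ k)) v) - Q (Q v)
            = (P (φ k)) ((P (φ k)) v - Q v) + (P (φ k) - Q) (Q v) := by
          rw [map_sub, ContinuousLinearMap.sub_apply]; abel
        rw [e1]
        refine le_trans (norm_add_le _ _) (add_le_add ?_ ?_)
        · refine le_trans (ContinuousLinearMap.le_opNorm _ _) ?_
          have := hPnorm (φ k)
          nlinarith [norm_nonneg ((P (φ k)) v - Q v)]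
        · exact ContinuousLinearMap.le_opNorm _ _
      · have g1 : Tendsto (fun k => ‖(P (φ k)) v - Q v‖) atTop (𝓝 0) := by
          rw [← tendsto_iff_norm_sub_tendsto_zero]; exact hPv
        have g2 : Tendsto (fun k => ‖P (φ k) - Q‖ * ‖Q v‖) atTop (𝓝 (0 * ‖Q v‖)) :=
          Tendsto.mul_const _ (tendsto_iff_norm_sub_tendsto_zero.mp hPQφ)
        rw [zero_mul] at g2
        simpa using g1.add g2
    have heq : (fun k => (P (φ k)) ((P (φ k)) v)) = (fun k => (P (φ k)) v) := by
      funext k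
      exact projL_eq_self (V (φ k)) (projL_mem (V (φ k)) v)
    rw [heq] at hPPv
    exact tendsto_nhds_unique hPPv hPv
  set W : Submodule ℝ (EuclideanSpace ℝ (Fin n)) :=
    LinearMap.range (Q : EuclideanSpace ℝ (Fin n) →ₗ[ℝ] EuclideanSpace ℝ (Fin n)) with hW
  have hmemW : ∀ v : EuclideanSpace ℝ (Fin n), Q v ∈ W := fun v => ⟨v, rfl⟩
  have hWfix : ∀ w ∈ W, Q w = w := by
    intro w hw
    obtain ⟨v, rfl⟩ := hw
    exact hQidem v
  have hyW : y ∈ Wᗮ := by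
    rw [Submodule.mem_orthogonal]
    intro w hw
    obtain ⟨v, rfl⟩ := hw
    show ⟪Q v, y⟫ = 0
    rw [hQsymm, hQy, inner_zero_right]
  have hWK : ∀ w ∈ W, ∃ u ∈ S, ∀ i, w i = 0 ∨ 0 < w i * u i := by
    intro w hwW
    by_cases hw0 : w = 0
    · exact ⟨0, S.zero_mem, fun i => Or.inl (by rw [hw0]; rfl)⟩
    · set F : Finset (Fin n) := Finset.univ.filter (fun i => w i ≠ 0) with hF
      have hFne : F.Nonempty := by
        obtain ⟨i0, hi0⟩ := exists_ne_coord hw0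
        exact ⟨i0, by simp [hF, hi0]⟩
      obtain ⟨imin, himinF, hmin⟩ := Finset.exists_min_image F (fun i => |w i|) hFne
      have hεpos : 0 < |w imin| := by
        have : w imin ≠ 0 := by
          have h := himinF; rw [hF, Finset.mem_filter] at h; exact h.2
        exact abs_pos.mpr this
      have hwlim : Tendsto (fun k => (P (φ k)) w) atTop (𝓝 w) := by
        have := tendsto_apply_of_tendsto hPQφ w
        rwa [hWfix w hwW] at this
      obtain ⟨N, hN⟩ := (Metric.tendsto_atTop.mp hwlim) (|w imin|) hεpos
      have hdist := hN N (le_refl N)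
      rw [dist_eq_norm] at hdist
      obtain ⟨u, hu, huw⟩ := Submodule.mem_map.mp (projL_mem (V (φ N)) w)
      refine ⟨u, hu, fun i => ?_⟩
      by_cases hwi : w i = 0
      · exact Or.inl hwi
      · right
        have hiF : i ∈ F := by simp [hF, hwi]
        have hbound : |(P (φ N)) w i - w i| ≤ ‖(P (φ N)) w - w‖ := by
          have h := abs_coord_le_norm ((P (φ N)) w - w) i
          simpa [PiLp.sub_apply] using h
        have hlt : |(P (φ N)) w i - w i| < |w i| :=
          lt_of_lt_of_le (lt_of_le_of_lt hbound hdist) (hmin i hiF)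
        have hsign : 0 < w i * (P (φ N)) w i := close_sign hlt
        have hco : (a (φ N) i)⁻¹ * u i = (P (φ N)) w i := by
          have : ((scaleE (fun j => (a (φ N) j)⁻¹) (hainvne (φ N))).toLinearMap u) i
              = (P (φ N)) w i := by rw [huw]
          exact this
        have hui : u i = a (φ N) i * ((P (φ N)) w i) := by
          rw [← hco]
          rw [← mul_assoc, mul_inv_cancel₀ (hane (φ N) i), one_mul]
        rw [hui]
        nlinarith [hapos (φ N) i, hsign]
  have hdisj : W ⊓ Stᗮ = ⊥ := by
    rw [Submodule.eq_bot_iff]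
    rintro w ⟨hwW, hwSt⟩
    exact hAs w hwSt (hWK w hwW)
  have hQproj : projL W = Q := by
    refine ContinuousLinearMap.ext fun v => ?_
    have h1 : Q v ∈ W := hmemW v
    have h2 : ∀ u ∈ W, ⟪v - Q v, u⟫ = 0 := by
      intro u hu
      obtain ⟨t, rfl⟩ := hu
      show (⟪v - Q v, Q t⟫ : ℝ) = 0
      rw [inner_sub_left]
      have h3 : ⟪Q v, Q t⟫ = ⟪v, Q t⟫ := by
        rw [hQsymm v (Q t), hQidem t]
      rw [h3, sub_self]
    have h4 := Submodule.eq_starProjection_of_mem_of_inner_eq_zero h1 h2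
    show projL W v = Q v
    exact h4
  have htrQ : trE Q = (Module.finrank ℝ S : ℝ) := by
    have hconst : ∀ k, trE (P (φ k)) = (Module.finrank ℝ S : ℝ) := by
      intro k
      have hv := hVrank (φ k)
      rw [hP]; dsimp only
      rw [trE_projL, hv]
    have hlim : Tendsto (fun k => trE (P (φ k))) atTop (𝓝 (trE Q)) := by
      unfold trE
      apply tendsto_finset_sum
      intro i _
      exact (tendsto_apply_of_tendsto hPQφ _).inner tendsto_const_nhds
    have hlim2 : Tendsto (fun k => trE (P (φ k))) atTop
        (𝓝 ((Module.finrank ℝ S : ℝ))) := by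
      simp only [hconst]; exact tendsto_const_nhds
    exact tendsto_nhds_unique hlim hlim2
  have hWrank : Module.finrank ℝ W = Module.finrank ℝ S := by
    have h5 : trE (projL W) = (Module.finrank ℝ W : ℝ) := trE_projL W
    rw [hQproj, htrQ] at h5
    exact_mod_cast h5.symm
  have hranksum : Module.finrank ℝ W + Module.finrank ℝ Stᗮ = n := by
    have h1 := Submodule.finrank_add_finrank_orthogonal (K := St)
    rw [finrank_euclideanSpace_fin] at h1
    rw [hWrank, hdim]
    omega
  have hsup : W ⊔ Stᗮ = ⊤ := by
    apply Submodule.eq_top_of_finrank_eq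
    have h2 := Submodule.finrank_sup_add_finrank_inf_eq W Stᗮ
    rw [hdisj] at h2
    simp only [finrank_bot, add_zero] at h2
    rw [finrank_euclideanSpace_fin]
    omega
  have hytop : y ∈ (W ⊔ Stᗮ)ᗮ := by
    rw [Submodule.mem_orthogonal]
    intro v hv
    obtain ⟨v1, hv1, v2, hv2, rfl⟩ := Submodule.mem_sup.mp hv
    rw [inner_add_left]
    have e1 : ⟪v1, y⟫ = (0:ℝ) := (Submodule.mem_orthogonal W y).mp hyW v1 hv1
    have e2 : ⟪v2, y⟫ = (0:ℝ) := by
      have h3 := (Submodule.mem_orthogonal St v2).mp hv2 y hy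
      rw [real_inner_comm] at h3
      exact h3
    rw [e1, e2, add_zero]
  rw [hsup, Submodule.top_orthogonal_eq_bot] at hytop
  exact (Submodule.mem_bot ℝ).mp hytop

open Filter Topology in
lemma mainAB (S St : Submodule ℝ E)
    (hdim : Module.finrank ℝ S = Module.finrank ℝ St)
    (hA : ∀ u ∈ S, ∃ v ∈ St, ∀ i, u i = 0 ∨ 0 < u i * v i) :
    ∀ x ∈ Sᗮ, ∃ y ∈ Stᗮ, ∀ i, x i = 0 ∨ 0 < x i * y i := by
  intro x hx
  apply gordan Stᗮ x
  intro w hw hconf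
  have hw' : w ∈ St := by rwa [Submodule.orthogonal_orthogonal] at hw
  exact mainCore S St hdim (Astar_of_A S St hA) hw' hx hconf

/-- the identity linear equivalence to Euclidean space -/
def eLn : (Fin n → ℝ) ≃ₗ[ℝ] EuclideanSpace ℝ (Fin n) :=
  (WithLp.linearEquiv 2 ℝ (Fin n → ℝ)).symm

@[simp] lemma eLn_apply (u : Fin n → ℝ) (i : Fin n) : (eLn u) i = u i := rfl
@[simp] lemma eLn_symm_apply (u : EuclideanSpace ℝ (Fin n)) (i : Fin n) :
    (eLn.symm u) i = u i := rfl

lemma signSet_subset_iff (T T' : Set (Fin n → ℝ)) :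
    signSet T ⊆ clSV (signSet T') ↔
      ∀ u ∈ T, ∃ v ∈ T', ∀ i, u i = 0 ∨ 0 < u i * v i := by
  constructor
  · intro h u hu
    obtain ⟨ρ, hρ, hle⟩ := h ⟨u, hu, rfl⟩
    obtain ⟨v, hv, rfl⟩ := hρ
    exact ⟨v, hv, fun i => sign_disj_iff.mp (hle i)⟩
  · rintro h σ ⟨u, hu, rfl⟩
    obtain ⟨v, hv, hc⟩ := h u hu
    exact ⟨signVec v, ⟨v, hv, rfl⟩, fun i => sign_disj_iff.mpr (hc i)⟩

lemma orthSet_mem_iff (S : Submodule ℝ (Fin n → ℝ)) (v : Fin n → ℝ) :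
    v ∈ orthSet (S : Set (Fin n → ℝ)) ↔ eLn v ∈ (S.map (eLn.toLinearMap : (Fin n → ℝ) →ₗ[ℝ] EuclideanSpace ℝ (Fin n)))ᗮ := by
  rw [Submodule.mem_orthogonal]
  constructor
  · intro h u hu
    obtain ⟨u0, hu0, rfl⟩ := Submodule.mem_map.mp hu
    rw [inner_eq_sum]
    exact h u0 hu0
  · intro h u hu
    have := h (eLn u) (Submodule.mem_map.mpr ⟨u, hu, rfl⟩)
    rw [inner_eq_sum] at this
    exact this

/-- transfer of the conformal condition through `eLn` on submodules -/
lemma cond_map_iff (S St : Submodule ℝ (Fin n → ℝ)) :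
    (∀ u ∈ S, ∃ v ∈ St, ∀ i, u i = 0 ∨ 0 < u i * v i) ↔
    (∀ u ∈ S.map (eLn.toLinearMap : (Fin n → ℝ) →ₗ[ℝ] EuclideanSpace ℝ (Fin n)),
      ∃ v ∈ St.map (eLn.toLinearMap : (Fin n → ℝ) →ₗ[ℝ] EuclideanSpace ℝ (Fin n)),
        ∀ i, u i = 0 ∨ 0 < u i * v i) := by
  constructor
  · intro h u hu
    obtain ⟨u0, hu0, rfl⟩ := Submodule.mem_map.mp hu
    obtain ⟨v, hv, hc⟩ := h u0 hu0
    exact ⟨eLn v, Submodule.mem_map.mpr ⟨v, hv, rfl⟩, hc⟩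
  · intro h u hu
    obtain ⟨v, hv, hc⟩ := h (eLn u) (Submodule.mem_map.mpr ⟨u, hu, rfl⟩)
    obtain ⟨v0, hv0, rfl⟩ := Submodule.mem_map.mp hv
    exact ⟨v0, hv0, hc⟩

/-- transfer of the conformal condition for orthogonal sets -/
lemma cond_orth_iff (S St : Submodule ℝ (Fin n → ℝ)) :
    (∀ u ∈ orthSet (S : Set (Fin n → ℝ)), ∃ v ∈ orthSet (St : Set (Fin n → ℝ)),
        ∀ i, u i = 0 ∨ 0 < u i * v i) ↔
    (∀ x ∈ (S.map (eLn.toLinearMap : (Fin n → ℝ) →ₗ[ℝ] EuclideanSpace ℝ (Fin n)))ᗮ,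
      ∃ y ∈ (St.map (eLn.toLinearMap : (Fin n → ℝ) →ₗ[ℝ] EuclideanSpace ℝ (Fin n)))ᗮ,
        ∀ i, x i = 0 ∨ 0 < x i * y i) := by
  constructor
  · intro h x hx
    have hx' : eLn.symm x ∈ orthSet (S : Set (Fin n → ℝ)) := by
      rw [orthSet_mem_iff]
      simpa using hx
    obtain ⟨v, hv, hc⟩ := h _ hx'
    refine ⟨eLn v, (orthSet_mem_iff St v).mp hv, fun i => hc i⟩
  · intro h u hu
    obtain ⟨y, hy, hc⟩ := h (eLn u) ((orthSet_mem_iff S u).mp hu)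
    refine ⟨eLn.symm y, ?_, fun i => hc i⟩
    rw [orthSet_mem_iff St]
    simpa using hy

end Stmt15Aux

open Stmt15Aux in
/-- for subspaces `S, S̃` of equal dimension,
`sign(S) ⊆ cl(sign(S̃))` iff `sign(S⊥) ⊆ cl(sign(S̃⊥))`. -/
theorem stmt15 {n : ℕ} (S St : Submodule ℝ (Fin n → ℝ))
    (hdim : Module.finrank ℝ S = Module.finrank ℝ St) :
    signSet (S : Set (Fin n → ℝ)) ⊆ clSV (signSet (St : Set (Fin n → ℝ))) ↔
    signSet (orthSet (S : Set (Fin n → ℝ))) ⊆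
      clSV (signSet (orthSet (St : Set (Fin n → ℝ)))) := by
  classical
  have hd' : Module.finrank ℝ (S.map (eLn.toLinearMap : (Fin n → ℝ) →ₗ[ℝ] EuclideanSpace ℝ (Fin n)))
      = Module.finrank ℝ (St.map (eLn.toLinearMap : (Fin n → ℝ) →ₗ[ℝ] EuclideanSpace ℝ (Fin n))) :=
    (LinearEquiv.finrank_map_eq eLn S).trans
      (hdim.trans (LinearEquiv.finrank_map_eq eLn St).symm)
  constructor
  · intro h
    refine (signSet_subset_iff _ _).mpr ?_
    refine (cond_orth_iff S St).mpr ?_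
    refine mainAB _ _ hd' ?_
    exact (cond_map_iff S St).mp ((signSet_subset_iff _ _).mp h)
  · intro h
    refine (signSet_subset_iff _ _).mpr ?_
    refine (cond_map_iff S St).mpr ?_
    have h1 := (cond_orth_iff S St).mp ((signSet_subset_iff _ _).mp h)
    have hd2 : Module.finrank ℝ
          ((S.map (eLn.toLinearMap : (Fin n → ℝ) →ₗ[ℝ] EuclideanSpace ℝ (Fin n)))ᗮ)
        = Module.finrank ℝ
          ((St.map (eLn.toLinearMap : (Fin n → ℝ) →ₗ[ℝ] EuclideanSpace ℝ (Fin n)))ᗮ) := by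
      have a1 := Submodule.finrank_add_finrank_orthogonal
        (K := S.map (eLn.toLinearMap : (Fin n → ℝ) →ₗ[ℝ] EuclideanSpace ℝ (Fin n)))
      have a2 := Submodule.finrank_add_finrank_orthogonal
        (K := St.map (eLn.toLinearMap : (Fin n → ℝ) →ₗ[ℝ] EuclideanSpace ℝ (Fin n)))
      omega
    have h2 := mainAB _ _ hd2 h1
    simp only [Submodule.orthogonal_orthogonal] at h2
    exact h2
end
end

section
/- Let S, S̃ be subspaces of ℝ^n of dimension n−d (with d ≤ n), and let W, W̃ ∈ ℝ^{d×n} be matrices of full rank d with ker W = S and ker W̃ = S̃. Then the following are equivalent: (1) sign(S) = sign(S̃), and a nonzero sign vector τ ∈ sign(S⊥) has minimal support if and only if its zero set τ⁰ has exactly d−1 elements; (2) either det(W_I)·det(W̃_I) > 0 for all subsets I ⊆ {1,…,n} of cardinality d, or det(W_I)·det(W̃_I) < 0 for all such subsets I. -/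
open scoped BigOperators

noncomputable section

/-- The `d×d` minor of a `d×n` matrix given by a choice `f` of `d` columns. -/
def minor {d n : ℕ} (W : Matrix (Fin d) (Fin n) ℝ) (f : Fin d → Fin n) : ℝ :=
  (W.submatrix id f).det

/-- A nonzero element of a set of sign vectors has (inclusion-)minimal support. -/
def hasMinSupport {n : ℕ} (T : Set (Fin n → SignType)) (τ : Fin n → SignType) : Prop :=
  ∀ τ' ∈ T, τ' ≠ 0 → {i | τ' i ≠ 0} ⊆ {i | τ i ≠ 0} → {i | τ' i ≠ 0} = {i | τ i ≠ 0}

open Matrix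

namespace Stmt17





/-- pad a vector supported on the image of `f` -/
def padVec {m n : ℕ} (f : Fin m → Fin n) (v : Fin m → ℝ) : Fin n → ℝ :=
  fun j => ∑ k, if f k = j then v k else 0

lemma padVec_apply {m n : ℕ} {f : Fin m → Fin n} (hf : Function.Injective f)
    (v : Fin m → ℝ) (k : Fin m) : padVec f v (f k) = v k := by
  rw [padVec, Finset.sum_eq_single k] <;> simp_all +contextual [hf.eq_iff]

lemma padVec_apply_of_not_mem {m n : ℕ} {f : Fin m → Fin n} (v : Fin m → ℝ) {j : Fin n}
    (hj : ∀ k, f k ≠ j) : padVec f v j = 0 := by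
  simp [padVec, hj]

lemma mulVec_padVec {d m n : ℕ} (W : Matrix (Fin d) (Fin n) ℝ) (f : Fin m → Fin n)
    (v : Fin m → ℝ) : W.mulVec (padVec f v) = (W.submatrix id f).mulVec v := by
  funext i
  simp only [Matrix.mulVec, dotProduct, padVec, Finset.mul_sum, Matrix.submatrix_apply,
    id_eq]
  rw [Finset.sum_comm]
  refine Finset.sum_congr rfl fun k _ => ?_
  simp [mul_ite, mul_zero, Finset.sum_ite_eq]

lemma padVec_eq_self {m n : ℕ} {f : Fin m → Fin n} (hf : Function.Injective f)
    {x : Fin n → ℝ} (hx : ∀ j, x j ≠ 0 → ∃ k, f k = j) : padVec f (x ∘ f) = x := by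
  funext j
  by_cases h : ∃ k, f k = j
  · obtain ⟨k, rfl⟩ := h; rw [padVec_apply hf]; rfl
  · push_neg at h
    rw [padVec_apply_of_not_mem _ h]
    by_contra hx0
    obtain ⟨k, hk⟩ := hx j (Ne.symm hx0)
    exact h k hk






lemma transpose_mulVec_eq_zero {d n : ℕ} {W : Matrix (Fin d) (Fin n) ℝ} (hW : W.rank = d)
    {l : Fin d → ℝ} (hl : Wᵀ.mulVec l = 0) : l = 0 := by
  have h1 : Wᵀ.rank = d := by rw [Matrix.rank_transpose, hW]
  have h2 := LinearMap.finrank_range_add_finrank_ker (Wᵀ.mulVecLin)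
  rw [Matrix.rank] at h1
  rw [h1] at h2
  simp only [Module.finrank_pi, Fintype.card_fin] at h2
  have h3 : Module.finrank ℝ (LinearMap.ker Wᵀ.mulVecLin) = 0 := by omega
  have h4 : LinearMap.ker Wᵀ.mulVecLin = ⊥ := Submodule.finrank_eq_zero.mp h3
  have : l ∈ LinearMap.ker Wᵀ.mulVecLin := by
    simpa [Matrix.mulVecLin, Matrix.mulVec_transpose] using hl
  rw [h4] at this
  simpa using this

/-- The orthogonal complement of `S` as a submodule. -/
def OS {n : ℕ} (S : Submodule ℝ (Fin n → ℝ)) : Submodule ℝ (Fin n → ℝ) where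
  carrier := orthSet (S : Set (Fin n → ℝ))
  zero_mem' := by intro u _; simp
  add_mem' := by
    intro a b ha hb u hu
    have := ha u hu; have := hb u hu
    simp only [Pi.add_apply, mul_add, Finset.sum_add_distrib]
    simp_all
  smul_mem' := by
    intro c a ha u hu
    have := ha u hu
    simp only [Pi.smul_apply, smul_eq_mul]
    calc ∑ i, u i * (c * a i) = c * ∑ i, u i * a i := by
            rw [Finset.mul_sum]; exact Finset.sum_congr rfl fun i _ => by ring
      _ = 0 := by rw [this, mul_zero]

lemma orth_eq_rowSpace {d n : ℕ} (hdn : d ≤ n) {S : Submodule ℝ (Fin n → ℝ)}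
    (hS : Module.finrank ℝ S = n - d) {W : Matrix (Fin d) (Fin n) ℝ} (hW : W.rank = d)
    (hkW : LinearMap.ker W.mulVecLin = S) {v : Fin n → ℝ} :
    v ∈ orthSet (S : Set (Fin n → ℝ)) ↔ ∃ l : Fin d → ℝ, v = Wᵀ.mulVec l := by
  have hle : LinearMap.range Wᵀ.mulVecLin ≤ OS S := by
    rintro - ⟨l, rfl⟩ u hu
    have hu' : W.mulVec u = 0 := by
      have : u ∈ LinearMap.ker W.mulVecLin := hkW ▸ hu
      simpa [Matrix.mulVecLin] using this
    have : ∑ i, u i * (Wᵀ.mulVecLin l) i = ∑ k, (W.mulVec u k) * l k := by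
      simp only [Matrix.mulVecLin_apply, Matrix.mulVec, dotProduct,
        Matrix.transpose_apply, Finset.mul_sum, Finset.sum_mul]
      rw [Finset.sum_comm]
      exact Finset.sum_congr rfl fun k _ => Finset.sum_congr rfl fun i _ => by ring
    rw [this, hu']
    simp
  have hrk : Module.finrank ℝ (LinearMap.range Wᵀ.mulVecLin) = d := by
    rw [← Matrix.rank, Matrix.rank_transpose, hW]
  have hinf : OS S ⊓ S = ⊥ := by
    rw [Submodule.eq_bot_iff]
    rintro x ⟨hx1, hx2⟩
    have h0 : ∑ i, x i * x i = 0 := hx1 x hx2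
    funext i
    have := (Finset.sum_eq_zero_iff_of_nonneg (fun i _ => mul_self_nonneg (x i))).mp h0 i
      (Finset.mem_univ i)
    simpa [mul_self_eq_zero] using this
  have hsup : Module.finrank ℝ (OS S ⊔ S : Submodule ℝ (Fin n → ℝ)) ≤ n := by
    simpa using (Submodule.finrank_le (OS S ⊔ S : Submodule ℝ (Fin n → ℝ)))
  have heq := Submodule.finrank_sup_add_finrank_inf_eq (OS S) S
  rw [hinf, hS] at heq
  simp only [finrank_bot, add_zero] at heq
  have hOSle : Module.finrank ℝ (OS S) ≤ d := by omega
  have : LinearMap.range Wᵀ.mulVecLin = OS S :=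
    Submodule.eq_of_le_of_finrank_le hle (by omega)
  constructor
  · intro hv
    have : v ∈ LinearMap.range Wᵀ.mulVecLin := this ▸ hv
    obtain ⟨l, hl⟩ := this
    exact ⟨l, by simpa [Matrix.mulVecLin, Matrix.mulVec_transpose] using hl.symm⟩
  · rintro ⟨l, rfl⟩
    have hmem : Wᵀ.mulVec l ∈ LinearMap.range Wᵀ.mulVecLin := ⟨l, by simp [Matrix.mulVecLin, Matrix.mulVec_transpose]⟩
    rw [this] at hmem
    exact hmem







/-- The circuit vector supported on the d+1 columns selected by `g`. -/
def cvec {d n : ℕ} (W : Matrix (Fin d) (Fin n) ℝ) (g : Fin (d + 1) → Fin n) :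
    Fin (d + 1) → ℝ :=
  fun k => (-1 : ℝ) ^ (k : ℕ) * minor W (g ∘ k.succAbove)

lemma cvec_mulVec_zero {d n : ℕ} (W : Matrix (Fin d) (Fin n) ℝ) (g : Fin (d + 1) → Fin n) :
    (W.submatrix id g).mulVec (cvec W g) = 0 := by
  funext i
  set B : Matrix (Fin (d + 1)) (Fin (d + 1)) ℝ :=
    Matrix.of (Fin.cons (fun c => W i (g c)) (fun r c => W r (g c))) with hB
  have hdet : B.det = 0 := by
    apply Matrix.det_zero_of_row_eq (i := (0 : Fin (d+1))) (j := i.succ) (Fin.succ_ne_zero i).symm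
    funext c
    simp [hB]
  rw [Matrix.det_succ_row_zero] at hdet
  have : ∀ j : Fin (d + 1), B.submatrix Fin.succ j.succAbove = W.submatrix id (g ∘ j.succAbove) := by
    intro j; ext r c; simp [hB]
  simp only [this] at hdet
  rw [Pi.zero_apply, ← hdet]
  simp only [Matrix.mulVec, dotProduct, Matrix.submatrix_apply, id_eq, cvec, minor]
  refine Finset.sum_congr rfl fun k _ => ?_
  have hB0 : B 0 k = W i (g k) := by simp [hB]
  rw [hB0]; ring


def supp {n : ℕ} (x : Fin n → ℝ) : Finset (Fin n) :=
  Finset.univ.filter (fun j => x j ≠ 0)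

lemma mem_supp {n : ℕ} {x : Fin n → ℝ} {j : Fin n} : j ∈ supp x ↔ x j ≠ 0 := by
  simp [supp]

lemma sq_mulVec_eq_zero {d n : ℕ} {W : Matrix (Fin d) (Fin n) ℝ} {f : Fin d → Fin n}
    (hdet : minor W f ≠ 0) {v : Fin d → ℝ} (hv : (W.submatrix id f).mulVec v = 0) : v = 0 := by
  by_contra h
  exact hdet ((Matrix.exists_mulVec_eq_zero_iff).mp ⟨v, h, hv⟩)

/-- all maximal minors are nonzero -/
def Unif {d n : ℕ} (W : Matrix (Fin d) (Fin n) ℝ) : Prop :=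
  ∀ f : Fin d → Fin n, StrictMono f → minor W f ≠ 0

lemma supp_card_ge {d n : ℕ} (hdn : d ≤ n) {W : Matrix (Fin d) (Fin n) ℝ} (hU : Unif W)
    {x : Fin n → ℝ} (hx : W.mulVec x = 0) (hx0 : x ≠ 0) : d + 1 ≤ (supp x).card := by
  by_contra h
  push_neg at h
  have hcard : (supp x).card ≤ d := by omega
  obtain ⟨I, hsub, hI⟩ := Finset.exists_superset_card_eq hcard (by simpa using hdn)
  set f := I.orderEmbOfFin hI with hf
  have hfr : Set.range f = (I : Set (Fin n)) := I.range_orderEmbOfFin hI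
  have hxf : padVec f (x ∘ f) = x := by
    apply padVec_eq_self f.injective
    intro j hj
    have : j ∈ (I : Set (Fin n)) := hsub (mem_supp.mpr hj)
    rw [← hfr] at this
    exact this
  have h0 : (W.submatrix id f).mulVec (x ∘ f) = 0 := by
    rw [← mulVec_padVec, hxf, hx]
  have := sq_mulVec_eq_zero (hU f f.strictMono) h0
  apply hx0
  rw [← hxf, this]
  funext j; simp [padVec]

lemma cov_zeros_le {d n : ℕ} (hd : 1 ≤ d) {W : Matrix (Fin d) (Fin n) ℝ} (hU : Unif W)
    {l : Fin d → ℝ} (hy : Wᵀ.mulVec l ≠ 0) :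
    (Finset.univ.filter (fun j => Wᵀ.mulVec l j = 0)).card ≤ d - 1 := by
  by_contra h
  push_neg at h
  have hcard : d ≤ (Finset.univ.filter (fun j => Wᵀ.mulVec l j = 0)).card := by omega
  obtain ⟨I, hsub, hI⟩ := Finset.exists_subset_card_eq hcard
  set f := I.orderEmbOfFin hI with hf
  have hl0 : l ≠ 0 := by rintro rfl; simp at hy
  have h0 : (W.submatrix id f)ᵀ.mulVec l = 0 := by
    funext k
    have hfk : f k ∈ Finset.univ.filter (fun j => Wᵀ.mulVec l j = 0) :=
      hsub (I.orderEmbOfFin_mem hI k)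
    have hz : Wᵀ.mulVec l (f k) = 0 := by simpa using hfk
    rw [Pi.zero_apply, ← hz]
    simp [Matrix.mulVec, dotProduct]
  have hdet : ((W.submatrix id f)ᵀ).det = 0 := Matrix.exists_mulVec_eq_zero_iff.mp ⟨l, hl0, h0⟩
  rw [Matrix.det_transpose] at hdet
  exact hU f f.strictMono hdet

lemma exists_covector_vanishing {d n : ℕ} {W : Matrix (Fin d) (Fin n) ℝ} (hW : W.rank = d)
    (Z : Finset (Fin n)) (hZ : Z.card < d) :
    ∃ l : Fin d → ℝ, l ≠ 0 ∧ ∀ j ∈ Z, Wᵀ.mulVec l j = 0 := by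
  set c := Z.card with hc
  set e := Z.orderEmbOfFin rfl with he
  set M : Matrix (Fin d) (Fin d) ℝ :=
    Matrix.of (fun r i => if h : (r : ℕ) < c then W i (e ⟨r, h⟩) else 0) with hM
  have hdet : M.det = 0 := by
    apply Matrix.det_eq_zero_of_row_eq_zero ⟨c, hZ⟩
    intro j; simp [hM]
  obtain ⟨v, hv0, hv⟩ := Matrix.exists_mulVec_eq_zero_iff.mpr hdet
  refine ⟨v, hv0, fun j hj => ?_⟩
  have : j ∈ (Z : Set (Fin n)) := hj
  rw [← Z.range_orderEmbOfFin rfl] at this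
  obtain ⟨r0, hr0⟩ := this
  have hr0d : (r0 : ℕ) < d := lt_of_lt_of_le r0.2 (le_of_lt hZ)
  have hlt : (r0 : ℕ) < c := r0.2
  have hcf := congrFun hv ⟨r0, hr0d⟩
  simp only [Matrix.mulVec, dotProduct, hM, Pi.zero_apply, Matrix.of_apply,
    dif_pos hlt, Fin.eta] at hcf
  rw [← hr0]
  simpa [Matrix.mulVec, dotProduct] using hcf

lemma prop1 {d n : ℕ} {W : Matrix (Fin d) (Fin n) ℝ} {g : Fin (d + 1) → Fin n}
    (hU : ∀ k : Fin (d+1), minor W (g ∘ k.succAbove) ≠ 0) {u v : Fin (d + 1) → ℝ}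
    (hu : (W.submatrix id g).mulVec u = 0) (hv : (W.submatrix id g).mulVec v = 0)
    (hv0 : v ≠ 0) : ∃ c : ℝ, u = c • v := by
  obtain ⟨k0, hk0⟩ : ∃ k0, v k0 ≠ 0 := by
    by_contra h; push_neg at h; exact hv0 (funext h)
  set c := u k0 / v k0 with hc
  set z := u - c • v with hz
  have hzk : (W.submatrix id g).mulVec z = 0 := by
    rw [hz, Matrix.mulVec_sub, hu]
    have : (W.submatrix id g).mulVec (c • v) = c • (W.submatrix id g).mulVec v := by
      rw [Matrix.mulVec_smul]
    rw [this, hv]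
    simp
  have hz0 : z k0 = 0 := by
    simp only [hz, hc, Pi.sub_apply, Pi.smul_apply, smul_eq_mul]
    field_simp
    ring
  have hzsub : (W.submatrix id (g ∘ k0.succAbove)).mulVec (z ∘ k0.succAbove) = 0 := by
    funext i
    have := congrFun hzk i
    simp only [Matrix.mulVec, dotProduct, Matrix.submatrix_apply, id_eq,
      Pi.zero_apply, Function.comp_apply] at this ⊢
    rw [Fin.sum_univ_succAbove _ k0, hz0, mul_zero, zero_add] at this
    exact this
  have hzz := sq_mulVec_eq_zero (hU k0) hzsub
  have hzall : z = 0 := by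
    funext k
    by_cases hk : k = k0
    · rw [hk]; exact hz0
    · obtain ⟨k', hk'⟩ := Fin.exists_succAbove_eq (Ne.symm (hk : k ≠ k0)).symm
      rw [← hk']
      exact congrFun hzz k'
  refine ⟨c, ?_⟩
  have := sub_eq_zero.mp (hz ▸ hzall)
  exact this



lemma sign_eq_of_mul_pos {a b : ℝ} (h : 0 < a * b) : SignType.sign a = SignType.sign b := by
  rcases lt_trichotomy a 0 with ha | ha | ha
  · have hb : b < 0 := by nlinarith
    rw [sign_neg ha, sign_neg hb]
  · subst ha; simp at h
  · have hb : 0 < b := by nlinarith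
    rw [sign_pos ha, sign_pos hb]

lemma sign_add_of_abs_lt {a b : ℝ} (h : |b| < |a|) : SignType.sign (a + b) = SignType.sign a := by
  rcases lt_trichotomy a 0 with ha | ha | ha
  · have : a + b < 0 := by cases abs_cases b with
      | inl hb => cases abs_cases a with
        | inl haa => nlinarith
        | inr haa => nlinarith
      | inr hb => cases abs_cases a with
        | inl haa => nlinarith
        | inr haa => nlinarith
    rw [sign_neg this, sign_neg ha]
  · subst ha; simp at h; linarith [abs_nonneg b]
  · have : 0 < a + b := by cases abs_cases b with
      | inl hb => cases abs_cases a with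
        | inl haa => nlinarith
        | inr haa => nlinarith
      | inr hb => cases abs_cases a with
        | inl haa => nlinarith
        | inr haa => nlinarith
    rw [sign_pos this, sign_pos ha]

lemma sign_pos_mul {t a : ℝ} (ht : 0 < t) : SignType.sign (t * a) = SignType.sign a := by
  rw [sign_mul, sign_pos ht, one_mul]

lemma eq_zero_iff_of_sign_eq {a b : ℝ} (h : SignType.sign a = SignType.sign b) :
    (a = 0 ↔ b = 0) := by
  constructor
  · intro ha; rw [ha, sign_zero] at h; exact sign_eq_zero_iff.mp h.symm
  · intro hb; rw [hb, sign_zero] at h; exact sign_eq_zero_iff.mp h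

lemma sign_surj_aux {d n : ℕ} (hdn : d ≤ n) (W Wt : Matrix (Fin d) (Fin n) ℝ)
    (hUW : Unif W) (hUWt : Unif Wt) (ηr : ℝ) (hη : ηr * ηr = 1)
    (hP : ∀ f : Fin d → Fin n, StrictMono f → 0 < ηr * (minor W f * minor Wt f)) :
    ∀ N : ℕ, ∀ x : Fin n → ℝ, (supp x).card ≤ N → W.mulVec x = 0 →
      ∃ y : Fin n → ℝ, Wt.mulVec y = 0 ∧ signVec y = signVec x := by
  intro N
  induction N with
  | zero =>
    intro x hcard hx
    have hx0 : x = 0 := by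
      funext j
      by_contra hj
      have hmem : j ∈ supp x := mem_supp.mpr hj
      have := Finset.card_pos.mpr ⟨j, hmem⟩
      omega
    exact ⟨0, by simp, by rw [hx0]⟩
  | succ N IH =>
    intro x hcard hx
    by_cases hx0 : x = 0
    · exact ⟨0, by simp, by rw [hx0]⟩
    have hsupp := supp_card_ge hdn hUW hx hx0
    obtain ⟨J, hJsub, hJcard⟩ := Finset.exists_subset_card_eq hsupp
    set g : Fin (d + 1) ↪o Fin n := J.orderEmbOfFin hJcard with hg
    have hgm : ∀ k : Fin (d + 1), StrictMono (⇑g ∘ Fin.succAbove k) :=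
      fun k => g.strictMono.comp (Fin.strictMono_succAbove k)
    have hm : ∀ k, minor W (⇑g ∘ Fin.succAbove k) ≠ 0 := fun k => hUW _ (hgm k)
    have hmt : ∀ k, minor Wt (⇑g ∘ Fin.succAbove k) ≠ 0 := fun k => hUWt _ (hgm k)
    have hmm : ∀ k, 0 < ηr * (minor W (⇑g ∘ Fin.succAbove k) * minor Wt (⇑g ∘ Fin.succAbove k)) :=
      fun k => hP _ (hgm k)
    set y0 : Fin n → ℝ := padVec ⇑g (cvec W ⇑g) with hy0
    have hy0g : ∀ k, y0 (g k) = cvec W ⇑g k :=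
      fun k => padVec_apply g.strictMono.injective _ k
    have hy0ne : ∀ k, y0 (g k) ≠ 0 := by
      intro k h
      rw [hy0g k, cvec] at h
      rcases mul_eq_zero.mp h with h' | h'
      · exact pow_ne_zero _ (by norm_num : (-1 : ℝ) ≠ 0) h'
      · exact hm k h'
    have hy0out : ∀ j, (∀ k, g k ≠ j) → y0 j = 0 := fun j h => padVec_apply_of_not_mem _ h
    have hxg : ∀ k, x (g k) ≠ 0 := by
      intro k
      exact mem_supp.mp (hJsub (J.orderEmbOfFin_mem hJcard k))
    have hεne : ∀ ε : ℝ, ε * ε = 1 → ε ≠ 0 := by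
      intro ε h h0; rw [h0] at h; norm_num at h
    obtain ⟨ε, hε, kinit, hkinit⟩ :
        ∃ ε : ℝ, ε * ε = 1 ∧ ∃ k, 0 < x (g k) * (ε * y0 (g k)) := by
      by_cases hcase : ∃ k, 0 < x (g k) * y0 (g k)
      · obtain ⟨k, hk⟩ := hcase
        exact ⟨1, by ring, k, by rw [one_mul]; exact hk⟩
      · push_neg at hcase
        have h1 := hcase 0
        have h2 : x (g 0) * y0 (g 0) ≠ 0 := mul_ne_zero (hxg 0) (hy0ne 0)
        refine ⟨-1, by ring, 0, ?_⟩
        have : x (g 0) * y0 (g 0) < 0 := lt_of_le_of_ne h1 h2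
        nlinarith
    set yv : Fin n → ℝ := ε • y0 with hyv
    have hyvj : ∀ j, yv j = ε * y0 j := fun j => rfl
    have hyvne : ∀ k, yv (g k) ≠ 0 :=
      fun k => mul_ne_zero (hεne ε hε) (hy0ne k)
    have hyvout : ∀ j, (∀ k, g k ≠ j) → yv j = 0 := by
      intro j h; rw [hyvj, hy0out j h, mul_zero]
    have hWyv : W.mulVec yv = 0 := by
      rw [hyv, Matrix.mulVec_smul, hy0, mulVec_padVec, cvec_mulVec_zero, smul_zero]
    set A : Finset (Fin (d + 1)) := Finset.univ.filter (fun k => 0 < x (g k) * yv (g k))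
      with hA
    have hAne : A.Nonempty := by
      refine ⟨kinit, ?_⟩
      rw [hA, Finset.mem_filter]
      refine ⟨Finset.mem_univ _, ?_⟩
      rw [hyvj]
      exact hkinit
    have hRne : (A.image (fun k => x (g k) / yv (g k))).Nonempty := hAne.image _
    set t0 := (A.image (fun k => x (g k) / yv (g k))).min' hRne with ht0
    obtain ⟨ks, hksA, hks⟩ := Finset.mem_image.mp ((A.image _).min'_mem hRne)
    have hprodks : 0 < x (g ks) * yv (g ks) := (Finset.mem_filter.mp hksA).2
    have ht0pos : 0 < t0 := by
      rw [ht0, ← hks]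
      rcases mul_pos_iff.mp hprodks with ⟨h1, h2⟩ | ⟨h1, h2⟩
      · exact div_pos h1 h2
      · exact div_pos_of_neg_of_neg h1 h2
    set w : Fin n → ℝ := x - t0 • yv with hw
    have hWw : W.mulVec w = 0 := by
      rw [hw, Matrix.mulVec_sub, hx, Matrix.mulVec_smul, hWyv, smul_zero, sub_zero]
    have hwks : w (g ks) = 0 := by
      have : w (g ks) = x (g ks) - t0 * yv (g ks) := rfl
      rw [this, ht0, ← hks, div_mul_cancel₀ _ (hyvne ks), sub_self]
    have hconf : ∀ j, w j ≠ 0 → SignType.sign (w j) = SignType.sign (x j) := by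
      intro j hwj
      by_cases hj : ∃ k, g k = j
      · obtain ⟨k, rfl⟩ := hj
        have hwk : w (g k) = x (g k) - t0 * yv (g k) := rfl
        by_cases hk : 0 < x (g k) * yv (g k)
        · have hkA : k ∈ A := Finset.mem_filter.mpr ⟨Finset.mem_univ _, hk⟩
          have ht0le : t0 ≤ x (g k) / yv (g k) :=
            (A.image _).min'_le _ (Finset.mem_image_of_mem _ hkA)
          rcases mul_pos_iff.mp hk with ⟨h1, h2⟩ | ⟨h1, h2⟩
          · have hle : t0 * yv (g k) ≤ x (g k) := by
              have := mul_le_mul_of_nonneg_right ht0le (le_of_lt h2)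
              rwa [div_mul_cancel₀ _ (ne_of_gt h2)] at this
            have hw0 : 0 ≤ w (g k) := by rw [hwk]; linarith
            have hwpos : 0 < w (g k) := lt_of_le_of_ne hw0 (Ne.symm hwj)
            rw [sign_pos hwpos, sign_pos h1]
          · have hle : x (g k) ≤ t0 * yv (g k) := by
              have := mul_le_mul_of_nonpos_right ht0le (le_of_lt h2)
              rwa [div_mul_cancel₀ _ (ne_of_lt h2)] at this
            have hw0 : w (g k) ≤ 0 := by rw [hwk]; linarith
            have hwneg : w (g k) < 0 := lt_of_le_of_ne hw0 hwj
            rw [sign_neg hwneg, sign_neg h1]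
        · have hk' : x (g k) * yv (g k) < 0 :=
            lt_of_le_of_ne (not_lt.mp hk) (mul_ne_zero (hxg k) (hyvne k))
          rcases mul_neg_iff.mp hk' with ⟨h1, h2⟩ | ⟨h1, h2⟩
          · have hwpos : 0 < w (g k) := by rw [hwk]; nlinarith
            rw [sign_pos hwpos, sign_pos h1]
          · have hwneg : w (g k) < 0 := by rw [hwk]; nlinarith
            rw [sign_neg hwneg, sign_neg h1]
      · push_neg at hj
        have : w j = x j := by
          have : w j = x j - t0 * yv j := rfl
          rw [this, hyvout j hj, mul_zero, sub_zero]
        rw [this]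
    have hsuppw : supp w ⊆ (supp x).erase (g ks) := by
      intro j hj
      have hwj : w j ≠ 0 := mem_supp.mp hj
      refine Finset.mem_erase.mpr ⟨?_, ?_⟩
      · intro h; rw [h] at hwj; exact hwj hwks
      · by_contra hxj
        have hxj0 : x j = 0 := by
          by_contra h; exact hxj (mem_supp.mpr h)
        have hjout : ∀ k, g k ≠ j := by
          intro k hk
          rw [← hk] at hxj0
          exact hxg k hxj0
        apply hwj
        have : w j = x j - t0 * yv j := rfl
        rw [this, hyvout j hjout, hxj0, mul_zero, sub_zero]
    have hcardw : (supp w).card ≤ N := by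
      have h1 := Finset.card_le_card hsuppw
      have h2 : (g ks) ∈ supp x := hJsub (J.orderEmbOfFin_mem hJcard ks)
      rw [Finset.card_erase_of_mem h2] at h1
      omega
    obtain ⟨wt, hWtwt, hsignwt⟩ := IH w hcardw hWw
    set yt : Fin n → ℝ := (ε * ηr) • padVec ⇑g (cvec Wt ⇑g) with hyt
    have hWtyt : Wt.mulVec yt = 0 := by
      rw [hyt, Matrix.mulVec_smul, mulVec_padVec, cvec_mulVec_zero, smul_zero]
    have hytg : ∀ k, yt (g k) = (ε * ηr) * cvec Wt ⇑g k := by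
      intro k
      have : yt (g k) = (ε * ηr) * padVec ⇑g (cvec Wt ⇑g) (g k) := rfl
      rw [this, padVec_apply g.strictMono.injective]
    have hsy : ∀ j, SignType.sign (yt j) = SignType.sign (yv j) := by
      intro j
      by_cases hj : ∃ k, g k = j
      · obtain ⟨k, rfl⟩ := hj
        apply sign_eq_of_mul_pos
        have hpow : ((-1 : ℝ)) ^ (k : ℕ) * ((-1 : ℝ)) ^ (k : ℕ) = 1 := by
          rw [← pow_add]
          exact Even.neg_one_pow ⟨k, rfl⟩
        have he1 : yt (g k) * yv (g k) =
            (ε * ε) * (((-1 : ℝ)) ^ (k : ℕ) * ((-1 : ℝ)) ^ (k : ℕ)) *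
              (ηr * (minor W (⇑g ∘ Fin.succAbove k) * minor Wt (⇑g ∘ Fin.succAbove k))) := by
          rw [hytg k, hyvj, hy0g k, cvec, cvec]
          ring
        rw [he1, hε, hpow, one_mul, one_mul]
        exact hmm k
      · push_neg at hj
        have h1 : yt (g 0) = yt (g 0) := rfl
        have hyt0 : yt j = 0 := by
          have : yt j = (ε * ηr) * padVec ⇑g (cvec Wt ⇑g) j := rfl
          rw [this, padVec_apply_of_not_mem _ hj, mul_zero]
        rw [hyt0, hyvout j hj]
    obtain ⟨tt, httpos, htbound⟩ :
        ∃ t : ℝ, 0 < t ∧ ∀ j, yt j ≠ 0 → wt j ≠ 0 → t * |yt j| < |wt j| := by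
      set B : Finset (Fin n) := Finset.univ.filter (fun j => yt j ≠ 0 ∧ wt j ≠ 0) with hB
      by_cases hBne : B.Nonempty
      · have hRBne : (B.image (fun j => |wt j| / |yt j|)).Nonempty := hBne.image _
        set m := (B.image (fun j => |wt j| / |yt j|)).min' hRBne with hmdef
        have hmpos : 0 < m := by
          obtain ⟨jm, hjmB, hjm⟩ := Finset.mem_image.mp ((B.image _).min'_mem hRBne)
          obtain ⟨hy1, hw1⟩ := (Finset.mem_filter.mp hjmB).2
          rw [hmdef, ← hjm]
          exact div_pos (abs_pos.mpr hw1) (abs_pos.mpr hy1)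
        refine ⟨m / 2, by linarith, ?_⟩
        intro j hyj hwj
        have hjB : j ∈ B := Finset.mem_filter.mpr ⟨Finset.mem_univ _, hyj, hwj⟩
        have hle : m ≤ |wt j| / |yt j| :=
          (B.image _).min'_le _ (Finset.mem_image_of_mem _ hjB)
        have hya : 0 < |yt j| := abs_pos.mpr hyj
        have hle2 : m * |yt j| ≤ |wt j| := (le_div_iff₀ hya).mp hle
        nlinarith
      · refine ⟨1, one_pos, ?_⟩
        intro j hyj hwj
        exact absurd ⟨j, Finset.mem_filter.mpr ⟨Finset.mem_univ _, hyj, hwj⟩⟩ hBne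
    refine ⟨wt + tt • yt, ?_, ?_⟩
    · rw [Matrix.mulVec_add, hWtwt, Matrix.mulVec_smul, hWtyt, smul_zero, add_zero]
    · funext j
      have sw : SignType.sign (wt j) = SignType.sign (w j) := congrFun hsignwt j
      have sy := hsy j
      have hxj : x j = w j + t0 * yv j := by
        have : w j = x j - t0 * yv j := rfl
        rw [this]; ring
      have happ : (wt + tt • yt) j = wt j + tt * yt j := rfl
      show SignType.sign ((wt + tt • yt) j) = SignType.sign (x j)
      rw [happ, hxj]
      by_cases hyvj0 : yv j = 0
      · have hytj0 : yt j = 0 := by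
          rw [hyvj0, sign_zero] at sy
          exact sign_eq_zero_iff.mp sy
        rw [hytj0, mul_zero, add_zero, hyvj0, mul_zero, add_zero, sw]
      · by_cases hwj0 : w j = 0
        · have hwtj0 : wt j = 0 := by
            rw [hwj0, sign_zero] at sw
            exact sign_eq_zero_iff.mp sw
          rw [hwtj0, zero_add, hwj0, zero_add, sign_pos_mul httpos, sign_pos_mul ht0pos]
          exact sy
        · have hwtj : wt j ≠ 0 := by
            intro h; rw [h, sign_zero] at sw; exact hwj0 (sign_eq_zero_iff.mp sw.symm)
          have hytj : yt j ≠ 0 := by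
            intro h; rw [h, sign_zero] at sy; exact hyvj0 (sign_eq_zero_iff.mp sy.symm)
          have hb := htbound j hytj hwtj
          have habs : |tt * yt j| < |wt j| := by
            rw [abs_mul, abs_of_pos httpos]; exact hb
          rw [sign_add_of_abs_lt habs, sw, ← hxj]
          exact hconf j hwj0

lemma signVec_eq_zero_iff {n : ℕ} {y : Fin n → ℝ} : signVec y = 0 ↔ y = 0 := by
  constructor
  · intro h; funext j
    have := congrFun h j
    exact sign_eq_zero_iff.mp this
  · intro h; subst h; funext j; simp [signVec]

def suppS {n : ℕ} (τ : Fin n → SignType) : Finset (Fin n) :=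
  Finset.univ.filter (fun i => τ i ≠ 0)

lemma suppS_subset_iff {n : ℕ} {τ' τ : Fin n → SignType} :
    {i | τ' i ≠ 0} ⊆ {i | τ i ≠ 0} ↔ suppS τ' ⊆ suppS τ := by
  constructor
  · intro h i hi
    simp only [suppS, Finset.mem_filter, Finset.mem_univ, true_and] at hi ⊢
    exact h hi
  · intro h i hi
    have := h (by simp only [suppS, Finset.mem_filter, Finset.mem_univ, true_and]; exact hi)
    simpa [suppS] using this

lemma suppS_eq_iff {n : ℕ} {τ' τ : Fin n → SignType} :
    {i | τ' i ≠ 0} = {i | τ i ≠ 0} ↔ suppS τ' = suppS τ := by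
  constructor
  · intro h
    exact Finset.Subset.antisymm (suppS_subset_iff.mp h.le) (suppS_subset_iff.mp h.ge)
  · intro h
    ext i
    constructor
    · intro hi
      have : i ∈ suppS τ' := by simpa [suppS] using hi
      rw [h] at this; simpa [suppS] using this
    · intro hi
      have : i ∈ suppS τ := by simpa [suppS] using hi
      rw [← h] at this; simpa [suppS] using this

lemma exists_min_support {n : ℕ} (T : Set (Fin n → SignType)) :
    ∀ N : ℕ, ∀ τ ∈ T, τ ≠ 0 → (suppS τ).card ≤ N →
      ∃ τ1 ∈ T, τ1 ≠ 0 ∧ suppS τ1 ⊆ suppS τ ∧ hasMinSupport T τ1 := by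
  intro N
  induction N with
  | zero =>
    intro τ hτ hτ0 hcard
    exfalso
    obtain ⟨i, hi⟩ : ∃ i, τ i ≠ 0 := by
      by_contra h; push_neg at h; exact hτ0 (funext fun i => h i)
    have : i ∈ suppS τ := by simpa [suppS] using hi
    have := Finset.card_pos.mpr ⟨i, this⟩
    omega
  | succ N IH =>
    intro τ hτ hτ0 hcard
    by_cases hmin : hasMinSupport T τ
    · exact ⟨τ, hτ, hτ0, Finset.Subset.refl _, hmin⟩
    · rw [hasMinSupport] at hmin
      push_neg at hmin
      obtain ⟨τ', hτ', hτ'0, hsub, hne⟩ := hmin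
      have hsubF : suppS τ' ⊆ suppS τ := suppS_subset_iff.mp hsub
      have hssub : suppS τ' ⊂ suppS τ :=
        lt_of_le_of_ne hsubF (fun h => hne (suppS_eq_iff.mpr h))
      have hlt : (suppS τ').card < (suppS τ).card := Finset.card_lt_card hssub
      obtain ⟨τ1, h1, h2, h3, h4⟩ := IH τ' hτ' hτ'0 (by omega)
      exact ⟨τ1, h1, h2, h3.trans hsubF, h4⟩

lemma unif_of_minsupport {d n : ℕ} (hd : 1 ≤ d) (hdn : d ≤ n)
    {S : Submodule ℝ (Fin n → ℝ)} (hS : Module.finrank ℝ S = n - d)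
    {W : Matrix (Fin d) (Fin n) ℝ} (hW : W.rank = d)
    (hkW : LinearMap.ker W.mulVecLin = S)
    (hmin : ∀ τ ∈ signSet (orthSet (S : Set (Fin n → ℝ))), τ ≠ 0 →
      hasMinSupport (signSet (orthSet (S : Set (Fin n → ℝ)))) τ →
        (Finset.univ.filter (fun i => τ i = 0)).card = d - 1) :
    Unif W := by
  intro f hf
  intro hdet
  have hdet' : ((W.submatrix id f)ᵀ).det = 0 := by rw [Matrix.det_transpose]; exact hdet
  obtain ⟨l, hl0, hlz⟩ := Matrix.exists_mulVec_eq_zero_iff.mpr hdet'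
  set y : Fin n → ℝ := Wᵀ.mulVec l with hy
  have hyz : ∀ k, y (f k) = 0 := by
    intro k
    have := congrFun hlz k
    simp only [Matrix.mulVec, dotProduct, Matrix.transpose_apply,
      Matrix.submatrix_apply, id_eq, Pi.zero_apply] at this ⊢
    exact this
  have hyne : y ≠ 0 := by
    intro h
    exact hl0 (transpose_mulVec_eq_zero hW h)
  set τ : Fin n → SignType := signVec y with hτ
  have hτT : τ ∈ signSet (orthSet (S : Set (Fin n → ℝ))) := by
    refine ⟨y, ?_, rfl⟩
    exact (orth_eq_rowSpace hdn hS hW hkW).mpr ⟨l, rfl⟩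
  have hτ0 : τ ≠ 0 := fun h => hyne (signVec_eq_zero_iff.mp h)
  obtain ⟨τ1, h1, h2, h3, h4⟩ := exists_min_support _ (suppS τ).card τ hτT hτ0 le_rfl
  have hcard1 := hmin τ1 h1 h2 h4
  -- zeros of τ1 contain zeros of τ which contain the image of f
  have himage : (Finset.univ.image f) ⊆ Finset.univ.filter (fun i => τ i = 0) := by
    intro j hj
    obtain ⟨k, _, rfl⟩ := Finset.mem_image.mp hj
    simp only [Finset.mem_filter, Finset.mem_univ, true_and, hτ, signVec]
    rw [hyz k, sign_zero]
  have hzsub : Finset.univ.filter (fun i => τ i = 0) ⊆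
      Finset.univ.filter (fun i => τ1 i = 0) := by
    intro j hj
    simp only [Finset.mem_filter, Finset.mem_univ, true_and] at hj ⊢
    by_contra hne
    have : j ∈ suppS τ1 := by simpa [suppS] using hne
    have := h3 this
    simp only [suppS, Finset.mem_filter, Finset.mem_univ, true_and] at this
    exact this hj
  have hdle : d ≤ (Finset.univ.filter (fun i => τ1 i = 0)).card := by
    calc d = (Finset.univ.image f).card := by
            rw [Finset.card_image_of_injective _ hf.injective, Finset.card_univ,
              Fintype.card_fin]
      _ ≤ (Finset.univ.filter (fun i => τ i = 0)).card := Finset.card_le_card himage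
      _ ≤ _ := Finset.card_le_card hzsub
  omega

lemma unif_of_transfer {d n : ℕ} {W Wt : Matrix (Fin d) (Fin n) ℝ} (hUW : Unif W)
    (htrans : ∀ x : Fin n → ℝ, Wt.mulVec x = 0 →
      ∃ y : Fin n → ℝ, W.mulVec y = 0 ∧ signVec y = signVec x) :
    Unif Wt := by
  intro f hf hdet
  obtain ⟨v, hv0, hvz⟩ := Matrix.exists_mulVec_eq_zero_iff.mpr hdet
  set x : Fin n → ℝ := padVec f v with hx
  have hxk : ∀ k, x (f k) = v k := fun k => padVec_apply hf.injective _ k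
  have hxout : ∀ j, (∀ k, f k ≠ j) → x j = 0 := fun j h => padVec_apply_of_not_mem _ h
  have hWtx : Wt.mulVec x = 0 := by rw [hx, mulVec_padVec, hvz]
  obtain ⟨y, hWy, hsign⟩ := htrans x hWtx
  have hyout : ∀ j, y j ≠ 0 → ∃ k, f k = j := by
    intro j hj
    by_contra h
    push_neg at h
    have hxj : x j = 0 := hxout j h
    have := congrFun hsign j
    simp only [signVec, hxj, sign_zero] at this
    exact hj (sign_eq_zero_iff.mp this)
  have hyeq : padVec f (y ∘ f) = y := padVec_eq_self hf.injective hyout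
  have hker : (W.submatrix id f).mulVec (y ∘ f) = 0 := by
    rw [← mulVec_padVec, hyeq, hWy]
  have hyf0 : y ∘ f ≠ 0 := by
    intro h
    obtain ⟨k, hk⟩ : ∃ k, v k ≠ 0 := by
      by_contra hh; push_neg at hh; exact hv0 (funext hh)
    have hsk := congrFun hsign (f k)
    simp only [signVec, hxk k] at hsk
    have : y (f k) = 0 := congrFun h k
    rw [this, sign_zero] at hsk
    exact hk (sign_eq_zero_iff.mp hsk.symm)
  exact hyf0 (sq_mulVec_eq_zero (hUW f hf) hker)

lemma sign_mul_pos_of_sign_eq {a b : ℝ} (ha : a ≠ 0)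
    (h : SignType.sign a = SignType.sign b) : 0 < a * b := by
  rcases lt_trichotomy a 0 with h1 | h1 | h1
  · rw [sign_neg h1] at h
    have : b < 0 := by
      rcases lt_trichotomy b 0 with h2 | h2 | h2
      · exact h2
      · subst h2; rw [sign_zero] at h; exact absurd h.symm (by decide)
      · rw [sign_pos h2] at h; exact absurd h.symm (by decide)
    nlinarith
  · exact absurd h1 ha
  · rw [sign_pos h1] at h
    have : 0 < b := by
      rcases lt_trichotomy b 0 with h2 | h2 | h2
      · rw [sign_neg h2] at h; exact absurd h.symm (by decide)
      · subst h2; rw [sign_zero] at h; exact absurd h.symm (by decide)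
      · exact h2
    nlinarith

lemma sign_eq_sign_of_mul_pos {c p q : ℝ} (h1 : 0 < c * p) (h2 : 0 < c * q) :
    SignType.sign p = SignType.sign q := by
  rcases lt_trichotomy c 0 with hc | hc | hc
  · have hp : p < 0 := by nlinarith
    have hq : q < 0 := by nlinarith
    rw [sign_neg hp, sign_neg hq]
  · subst hc; simp at h1
  · have hp : 0 < p := by nlinarith
    have hq : 0 < q := by nlinarith
    rw [sign_pos hp, sign_pos hq]

lemma minor_adj {d n : ℕ} {W Wt : Matrix (Fin d) (Fin n) ℝ}
    (hUW : Unif W) (hUWt : Unif Wt)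
    (htrans : ∀ x : Fin n → ℝ, W.mulVec x = 0 →
      ∃ y : Fin n → ℝ, Wt.mulVec y = 0 ∧ signVec y = signVec x)
    (g : Fin (d + 1) → Fin n) (hg : StrictMono g) :
    ∀ k k' : Fin (d + 1),
      SignType.sign (minor W (g ∘ Fin.succAbove k) * minor Wt (g ∘ Fin.succAbove k)) =
      SignType.sign (minor W (g ∘ Fin.succAbove k') * minor Wt (g ∘ Fin.succAbove k')) := by
  have hgm : ∀ k : Fin (d + 1), StrictMono (g ∘ Fin.succAbove k) :=
    fun k => hg.comp (Fin.strictMono_succAbove k)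
  have hm : ∀ k, minor W (g ∘ Fin.succAbove k) ≠ 0 := fun k => hUW _ (hgm k)
  have hmt : ∀ k, minor Wt (g ∘ Fin.succAbove k) ≠ 0 := fun k => hUWt _ (hgm k)
  set x : Fin n → ℝ := padVec g (cvec W g) with hx
  have hxg : ∀ k, x (g k) = cvec W g k := fun k => padVec_apply hg.injective _ k
  have hxgne : ∀ k, x (g k) ≠ 0 := by
    intro k h
    rw [hxg k, cvec] at h
    rcases mul_eq_zero.mp h with h' | h'
    · exact pow_ne_zero _ (by norm_num : (-1 : ℝ) ≠ 0) h'
    · exact hm k h'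
  have hWx : W.mulVec x = 0 := by rw [hx, mulVec_padVec, cvec_mulVec_zero]
  obtain ⟨y, hWty, hsign⟩ := htrans x hWx
  have hyout : ∀ j, y j ≠ 0 → ∃ k, g k = j := by
    intro j hj
    by_contra h
    push_neg at h
    have hxj : x j = 0 := padVec_apply_of_not_mem _ h
    have := congrFun hsign j
    simp only [signVec, hxj, sign_zero] at this
    exact hj (sign_eq_zero_iff.mp this)
  have hyeq : padVec g (y ∘ g) = y := padVec_eq_self hg.injective hyout
  have hker : (W.submatrix id g).mulVec (cvec W g) = 0 := cvec_mulVec_zero W g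
  have hkert : (Wt.submatrix id g).mulVec (y ∘ g) = 0 := by
    rw [← mulVec_padVec, hyeq, hWty]
  have hcvt0 : cvec Wt g ≠ 0 := by
    intro h
    have := congrFun h 0
    rw [cvec] at this
    simp only [Pi.zero_apply] at this
    rcases mul_eq_zero.mp this with h' | h'
    · exact pow_ne_zero _ (by norm_num : (-1 : ℝ) ≠ 0) h'
    · exact hmt 0 h'
  obtain ⟨c, hc⟩ := prop1 hmt hkert (cvec_mulVec_zero Wt g) hcvt0
  have hyg : ∀ k, y (g k) = c * cvec Wt g k := by
    intro k
    have := congrFun hc k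
    simpa using this
  have hkey : ∀ k : Fin (d + 1),
      0 < c * (minor W (g ∘ Fin.succAbove k) * minor Wt (g ∘ Fin.succAbove k)) := by
    intro k
    have hsk : SignType.sign (x (g k)) = SignType.sign (y (g k)) :=
      (congrFun hsign (g k)).symm
    have hpos : 0 < x (g k) * y (g k) := sign_mul_pos_of_sign_eq (hxgne k) hsk
    have hpow : ((-1 : ℝ)) ^ (k : ℕ) * ((-1 : ℝ)) ^ (k : ℕ) = 1 := by
      rw [← pow_add]; exact Even.neg_one_pow ⟨k, rfl⟩
    have he : x (g k) * y (g k) =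
        (((-1 : ℝ)) ^ (k : ℕ) * ((-1 : ℝ)) ^ (k : ℕ)) *
          (c * (minor W (g ∘ Fin.succAbove k) * minor Wt (g ∘ Fin.succAbove k))) := by
      rw [hxg k, hyg k, cvec, cvec]; ring
    rw [he, hpow, one_mul] at hpos
    exact hpos
  intro k k'
  exact sign_eq_sign_of_mul_pos (hkey k) (hkey k')

lemma image_comp_succAbove {d n : ℕ} {g : Fin (d + 1) → Fin n} (hg : StrictMono g)
    (k : Fin (d + 1)) :
    Finset.univ.image (g ∘ Fin.succAbove k) = (Finset.univ.image g).erase (g k) := by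
  apply Finset.eq_of_subset_of_card_le
  · intro j hj
    obtain ⟨r, _, rfl⟩ := Finset.mem_image.mp hj
    refine Finset.mem_erase.mpr ⟨?_, ?_⟩
    · simp only [Function.comp_apply]
      intro h
      exact Fin.succAbove_ne k r (hg.injective h)
    · exact Finset.mem_image.mpr ⟨_, Finset.mem_univ _, rfl⟩
  · rw [Finset.card_erase_of_mem (Finset.mem_image.mpr ⟨k, Finset.mem_univ _, rfl⟩),
      Finset.card_image_of_injective _ hg.injective,
      Finset.card_image_of_injective _ (hg.comp (Fin.strictMono_succAbove k)).injective]
    simp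

lemma strictMono_eq_of_image_eq {d n : ℕ} {f f' : Fin d → Fin n} (hf : StrictMono f)
    (hf' : StrictMono f') (h : Finset.univ.image f = Finset.univ.image f') : f = f' := by
  have hcard : (Finset.univ.image f).card = d := by
    rw [Finset.card_image_of_injective _ hf.injective]; simp
  have h1 : f = (Finset.univ.image f).orderEmbOfFin hcard :=
    Finset.orderEmbOfFin_unique hcard
      (fun i => Finset.mem_image.mpr ⟨i, Finset.mem_univ _, rfl⟩) hf
  have hcard' : (Finset.univ.image f).card = d := hcard
  have h2 : f' = (Finset.univ.image f).orderEmbOfFin hcard := by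
    apply Finset.orderEmbOfFin_unique hcard _ hf'
    intro i
    rw [h]
    exact Finset.mem_image.mpr ⟨i, Finset.mem_univ _, rfl⟩
  rw [h1, h2]

lemma sign_const_of_adj {d n : ℕ} (F : (Fin d → Fin n) → SignType)
    (hadj : ∀ g : Fin (d + 1) → Fin n, StrictMono g → ∀ k k' : Fin (d + 1),
      F (g ∘ Fin.succAbove k) = F (g ∘ Fin.succAbove k')) :
    ∀ f f' : Fin d → Fin n, StrictMono f → StrictMono f' → F f = F f' := by
  suffices H : ∀ m : ℕ, ∀ f f' : Fin d → Fin n, StrictMono f → StrictMono f' →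
      ((Finset.univ.image f) \ (Finset.univ.image f')).card ≤ m → F f = F f' by
    intro f f' hf hf'
    exact H _ f f' hf hf' le_rfl
  intro m
  induction m with
  | zero =>
    intro f f' hf hf' hcard
    have hsub : Finset.univ.image f ⊆ Finset.univ.image f' := by
      rw [← Finset.sdiff_eq_empty_iff_subset]
      exact Finset.card_eq_zero.mp (Nat.le_zero.mp hcard)
    have heq : Finset.univ.image f = Finset.univ.image f' := by
      apply Finset.eq_of_subset_of_card_le hsub
      rw [Finset.card_image_of_injective _ hf'.injective,
        Finset.card_image_of_injective _ hf.injective]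
    rw [strictMono_eq_of_image_eq hf hf' heq]
  | succ m IH =>
    intro f f' hf hf' hcard
    set I := Finset.univ.image f with hI
    set I' := Finset.univ.image f' with hI'
    replace hcard : (I \ I').card ≤ m + 1 := hcard
    by_cases h0 : (I \ I').card = 0
    · exact IH f f' hf hf' (by rw [← hI, ← hI']; omega)
    have hIcard : I.card = d := by
      rw [hI, Finset.card_image_of_injective _ hf.injective]; simp
    have hI'card : I'.card = d := by
      rw [hI', Finset.card_image_of_injective _ hf'.injective]; simp
    obtain ⟨a, ha⟩ := Finset.card_pos.mp (by omega : 0 < (I \ I').card)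
    have hba : (I' \ I).card = (I \ I').card := by
      rw [Finset.card_sdiff_comm (hIcard.trans hI'card.symm)]
    obtain ⟨b, hb⟩ := Finset.card_pos.mp (by omega : 0 < (I' \ I).card)
    have haI : a ∈ I := (Finset.mem_sdiff.mp ha).1
    have haI' : a ∉ I' := (Finset.mem_sdiff.mp ha).2
    have hbI' : b ∈ I' := (Finset.mem_sdiff.mp hb).1
    have hbI : b ∉ I := (Finset.mem_sdiff.mp hb).2
    set J : Finset (Fin n) := insert b I with hJ
    have hJcard : J.card = d + 1 := by
      rw [hJ, Finset.card_insert_of_notMem hbI, hIcard]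
    set g : Fin (d + 1) ↪o Fin n := J.orderEmbOfFin hJcard with hg
    have hgrange : ∀ j ∈ J, ∃ k, g k = j := by
      intro j hj
      have : j ∈ (J : Set (Fin n)) := hj
      rw [← J.range_orderEmbOfFin hJcard] at this
      exact this
    have hgmem : ∀ k, g k ∈ J := fun k => J.orderEmbOfFin_mem hJcard k
    have hgimage : Finset.univ.image ⇑g = J := by
      apply Finset.eq_of_subset_of_card_le
      · intro j hj
        obtain ⟨r, _, rfl⟩ := Finset.mem_image.mp hj
        exact hgmem r
      · rw [Finset.card_image_of_injective _ g.strictMono.injective, hJcard]; simp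
    obtain ⟨kb, hkb⟩ := hgrange b (by rw [hJ]; exact Finset.mem_insert_self _ _)
    obtain ⟨ka, hka⟩ := hgrange a (by rw [hJ]; exact Finset.mem_insert_of_mem haI)
    have himgb : Finset.univ.image (⇑g ∘ Fin.succAbove kb) = I := by
      rw [image_comp_succAbove g.strictMono, hgimage, hkb, hJ,
        Finset.erase_insert hbI]
    have hfeq : ⇑g ∘ Fin.succAbove kb = f := by
      apply strictMono_eq_of_image_eq (g.strictMono.comp (Fin.strictMono_succAbove kb)) hf
      rw [himgb]
    have hf'' : StrictMono (⇑g ∘ Fin.succAbove ka) :=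
      g.strictMono.comp (Fin.strictMono_succAbove ka)
    have himga : Finset.univ.image (⇑g ∘ Fin.succAbove ka) = J.erase a := by
      rw [image_comp_succAbove g.strictMono, hgimage, hka]
    have step1 : F f = F (⇑g ∘ Fin.succAbove ka) := by
      rw [← hfeq]
      exact hadj ⇑g g.strictMono kb ka
    have step2 : F (⇑g ∘ Fin.succAbove ka) = F f' := by
      apply IH _ _ hf'' hf'
      have hsub : Finset.univ.image (⇑g ∘ Fin.succAbove ka) \ I' ⊆ (I \ I').erase a := by
        intro j hj
        obtain ⟨hj1, hj2⟩ := Finset.mem_sdiff.mp hj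
        rw [himga] at hj1
        obtain ⟨hja, hjJ⟩ := Finset.mem_erase.mp hj1
        refine Finset.mem_erase.mpr ⟨hja, Finset.mem_sdiff.mpr ⟨?_, hj2⟩⟩
        rw [hJ] at hjJ
        rcases Finset.mem_insert.mp hjJ with h | h
        · exact absurd (h ▸ hbI') hj2
        · exact h
      calc (Finset.univ.image (⇑g ∘ Fin.succAbove ka) \ I').card
          ≤ ((I \ I').erase a).card := Finset.card_le_card hsub
        _ = (I \ I').card - 1 := Finset.card_erase_of_mem ha
        _ ≤ m := Nat.sub_le_iff_le_add.mpr hcard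
    rw [step1, step2]

lemma mem_ker_iff {d n : ℕ} {W : Matrix (Fin d) (Fin n) ℝ} {S : Submodule ℝ (Fin n → ℝ)}
    (hkW : LinearMap.ker W.mulVecLin = S) {x : Fin n → ℝ} : x ∈ S ↔ W.mulVec x = 0 := by
  rw [← hkW]
  simp [LinearMap.mem_ker, Matrix.mulVecLin_apply]

lemma minsupp_iff_card {d n : ℕ} (hd : 1 ≤ d) (hdn : d ≤ n)
    {S : Submodule ℝ (Fin n → ℝ)} (hS : Module.finrank ℝ S = n - d)
    {W : Matrix (Fin d) (Fin n) ℝ} (hW : W.rank = d)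
    (hkW : LinearMap.ker W.mulVecLin = S) (hUW : Unif W) :
    ∀ τ ∈ signSet (orthSet (S : Set (Fin n → ℝ))), τ ≠ 0 →
      (hasMinSupport (signSet (orthSet (S : Set (Fin n → ℝ)))) τ ↔
        (Finset.univ.filter (fun i => τ i = 0)).card = d - 1) := by
  rintro τ ⟨y, hyo, rfl⟩ hτ0
  have hyne : y ≠ 0 := fun h => hτ0 (signVec_eq_zero_iff.mpr h)
  obtain ⟨l, rfl⟩ := (orth_eq_rowSpace hdn hS hW hkW).mp hyo
  set y := Wᵀ.mulVec l with hydef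
  have hzeq : Finset.univ.filter (fun i => signVec y i = 0) =
      Finset.univ.filter (fun i => y i = 0) := by
    ext i; simp [signVec, sign_eq_zero_iff]
  have hle : (Finset.univ.filter (fun i => y i = 0)).card ≤ d - 1 :=
    cov_zeros_le hd hUW hyne
  constructor
  · intro hmin
    rw [hzeq]
    by_contra hne
    have hlt : (Finset.univ.filter (fun i => y i = 0)).card < d - 1 := by omega
    obtain ⟨j1, hj1⟩ : ∃ j1, y j1 ≠ 0 := by
      by_contra h; push_neg at h; exact hyne (funext h)
    set Z' : Finset (Fin n) := insert j1 (Finset.univ.filter (fun i => y i = 0)) with hZ'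
    have hZ'card : Z'.card < d := by
      rw [hZ']
      have := Finset.card_insert_le j1 (Finset.univ.filter (fun i => y i = 0))
      omega
    obtain ⟨l', hl'0, hvan⟩ := exists_covector_vanishing hW Z' hZ'card
    have hy'ne : Wᵀ.mulVec l' ≠ 0 := fun h => hl'0 (transpose_mulVec_eq_zero hW h)
    have hτ'T : signVec (Wᵀ.mulVec l') ∈ signSet (orthSet (S : Set (Fin n → ℝ))) :=
      ⟨_, (orth_eq_rowSpace hdn hS hW hkW).mpr ⟨l', rfl⟩, rfl⟩
    have hτ'0 : signVec (Wᵀ.mulVec l') ≠ 0 :=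
      fun h => hy'ne (signVec_eq_zero_iff.mp h)
    have hsub : {i | signVec (Wᵀ.mulVec l') i ≠ 0} ⊆ {i | signVec y i ≠ 0} := by
      intro i hi
      simp only [Set.mem_setOf_eq, signVec, ne_eq, sign_eq_zero_iff] at hi ⊢
      intro h0
      apply hi
      apply hvan
      rw [hZ']
      exact Finset.mem_insert_of_mem (by simp [h0])
    have heq := hmin _ hτ'T hτ'0 hsub
    have hj1mem : j1 ∈ {i | signVec y i ≠ 0} := by
      simp [signVec, sign_eq_zero_iff, hj1]
    rw [← heq] at hj1mem
    simp only [Set.mem_setOf_eq, signVec, ne_eq, sign_eq_zero_iff] at hj1mem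
    exact hj1mem (hvan j1 (by rw [hZ']; exact Finset.mem_insert_self _ _))
  · intro hcard
    rw [hzeq] at hcard
    rintro τ' ⟨y', hy'o, rfl⟩ hτ'0 hsub
    have hy'ne : y' ≠ 0 := fun h => hτ'0 (signVec_eq_zero_iff.mpr h)
    obtain ⟨l', rfl⟩ := (orth_eq_rowSpace hdn hS hW hkW).mp hy'o
    set y' := Wᵀ.mulVec l' with hy'def
    have hle' : (Finset.univ.filter (fun i => y' i = 0)).card ≤ d - 1 :=
      cov_zeros_le hd hUW hy'ne
    have hsubZ : Finset.univ.filter (fun i => y i = 0) ⊆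
        Finset.univ.filter (fun i => y' i = 0) := by
      intro i hi
      simp only [Finset.mem_filter, Finset.mem_univ, true_and] at hi ⊢
      by_contra h
      have : i ∈ {i | signVec y' i ≠ 0} := by
        simp [signVec, sign_eq_zero_iff, h]
      have := hsub this
      simp only [Set.mem_setOf_eq, signVec, ne_eq, sign_eq_zero_iff] at this
      exact this hi
    have heqZ : Finset.univ.filter (fun i => y i = 0) =
        Finset.univ.filter (fun i => y' i = 0) :=
      Finset.eq_of_subset_of_card_le hsubZ (by omega)
    ext i
    simp only [Set.mem_setOf_eq, signVec, ne_eq, sign_eq_zero_iff]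
    constructor
    · intro hi h0
      have : i ∈ Finset.univ.filter (fun i => y i = 0) := by simp [h0]
      rw [heqZ] at this
      simp only [Finset.mem_filter, Finset.mem_univ, true_and] at this
      exact hi this
    · intro hi h0
      have : i ∈ Finset.univ.filter (fun i => y' i = 0) := by simp [h0]
      rw [← heqZ] at this
      simp only [Finset.mem_filter, Finset.mem_univ, true_and] at this
      exact hi this

end Stmt17

open Matrix

/-- for subspaces `S, S̃` of dimension `n - d` and matrices `W, W̃` of full
rank `d` with kernels `S, S̃`: (`sign(S) = sign(S̃)` and the nonzero elements of
`sign(S⊥)` of minimal support are exactly those whose zero set has `d - 1` elements) iff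
(all products of corresponding maximal minors of `W` and `W̃` are positive, or all are
negative). -/
theorem stmt17 {d n : ℕ} (hdn : d ≤ n)
    (S St : Submodule ℝ (Fin n → ℝ))
    (hS : Module.finrank ℝ S = n - d) (hSt : Module.finrank ℝ St = n - d)
    (W Wt : Matrix (Fin d) (Fin n) ℝ) (hW : W.rank = d) (hWt : Wt.rank = d)
    (hkW : LinearMap.ker W.mulVecLin = S) (hkWt : LinearMap.ker Wt.mulVecLin = St) :
    (signSet (S : Set (Fin n → ℝ)) = signSet (St : Set (Fin n → ℝ)) ∧
     ∀ τ ∈ signSet (orthSet (S : Set (Fin n → ℝ))), τ ≠ 0 →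
       (hasMinSupport (signSet (orthSet (S : Set (Fin n → ℝ)))) τ ↔
        (Finset.univ.filter (fun i => τ i = 0)).card = d - 1)) ↔
    ((∀ f : Fin d → Fin n, StrictMono f → 0 < minor W f * minor Wt f) ∨
     (∀ f : Fin d → Fin n, StrictMono f → minor W f * minor Wt f < 0)) := by
  by_cases hd : d = 0
  · subst hd
    apply iff_of_true
    · constructor
      · have hker : ∀ (M : Matrix (Fin 0) (Fin n) ℝ), LinearMap.ker M.mulVecLin = ⊤ :=
          fun M => LinearMap.ker_eq_top.mpr (Subsingleton.elim _ _)
        have hSS : S = St := by rw [← hkW, ← hkWt, hker, hker]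
        rw [hSS]
      · rintro τ ⟨v, hv, rfl⟩ hτ0
        exfalso
        apply hτ0
        apply Stmt17.signVec_eq_zero_iff.mpr
        have hST : S = ⊤ := by
          rw [← hkW]; exact LinearMap.ker_eq_top.mpr (Subsingleton.elim _ _)
        have h0 : ∑ i, v i * v i = 0 := hv v (by rw [hST]; trivial)
        funext i
        have := (Finset.sum_eq_zero_iff_of_nonneg
          (fun i _ => mul_self_nonneg (v i))).mp h0 i (Finset.mem_univ i)
        simpa [mul_self_eq_zero] using this
    · left
      intro f hf
      have h1 : minor W f = 1 := Matrix.det_fin_zero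
      have h2 : minor Wt f = 1 := Matrix.det_fin_zero
      rw [h1, h2]; norm_num
  · have hd1 : 1 ≤ d := Nat.one_le_iff_ne_zero.mpr hd
    constructor
    · rintro ⟨hsign, hmin⟩
      have hUW : Stmt17.Unif W := Stmt17.unif_of_minsupport hd1 hdn hS hW hkW
        (fun τ hτ h0 hms => (hmin τ hτ h0).mp hms)
      have htrans1 : ∀ x : Fin n → ℝ, W.mulVec x = 0 →
          ∃ y, Wt.mulVec y = 0 ∧ signVec y = signVec x := by
        intro x hx
        have hxS : x ∈ S := (Stmt17.mem_ker_iff hkW).mpr hx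
        have hmem : signVec x ∈ signSet (St : Set (Fin n → ℝ)) := by
          rw [← hsign]; exact ⟨x, hxS, rfl⟩
        obtain ⟨y, hy, hyeq⟩ := hmem
        exact ⟨y, (Stmt17.mem_ker_iff hkWt).mp hy, hyeq⟩
      have htrans2 : ∀ x : Fin n → ℝ, Wt.mulVec x = 0 →
          ∃ y, W.mulVec y = 0 ∧ signVec y = signVec x := by
        intro x hx
        have hxS : x ∈ St := (Stmt17.mem_ker_iff hkWt).mpr hx
        have hmem : signVec x ∈ signSet (S : Set (Fin n → ℝ)) := by
          rw [hsign]; exact ⟨x, hxS, rfl⟩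
        obtain ⟨y, hy, hyeq⟩ := hmem
        exact ⟨y, (Stmt17.mem_ker_iff hkW).mp hy, hyeq⟩
      have hUWt : Stmt17.Unif Wt := Stmt17.unif_of_transfer hUW htrans2
      have hadj := Stmt17.minor_adj hUW hUWt htrans1
      have hconst := Stmt17.sign_const_of_adj
        (fun f => SignType.sign (minor W f * minor Wt f))
        (fun g hg k k' => hadj g hg k k')
      set f0 : Fin d → Fin n := Fin.castLE hdn with hf0
      have hf0m : StrictMono f0 := Fin.strictMono_castLE hdn
      have hP0 : minor W f0 * minor Wt f0 ≠ 0 := mul_ne_zero (hUW f0 hf0m) (hUWt f0 hf0m)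
      rcases lt_trichotomy (minor W f0 * minor Wt f0) 0 with h | h | h
      · right
        intro f hf
        have hc := hconst f f0 hf hf0m
        rw [sign_neg h] at hc
        exact sign_eq_neg_one_iff.mp hc
      · exact absurd h hP0
      · left
        intro f hf
        have hc := hconst f f0 hf hf0m
        rw [sign_pos h] at hc
        exact sign_eq_one_iff.mp hc
    · intro hrhs
      obtain ⟨ηr, hη, hP⟩ : ∃ ηr : ℝ, ηr * ηr = 1 ∧ ∀ f : Fin d → Fin n, StrictMono f →
          0 < ηr * (minor W f * minor Wt f) := by
        rcases hrhs with h | h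
        · exact ⟨1, by norm_num, fun f hf => by rw [one_mul]; exact h f hf⟩
        · exact ⟨-1, by norm_num, fun f hf => by have := h f hf; nlinarith⟩
      have hUW : Stmt17.Unif W := by
        intro f hf h0
        have := hP f hf
        rw [h0, zero_mul, mul_zero] at this
        exact lt_irrefl 0 this
      have hUWt : Stmt17.Unif Wt := by
        intro f hf h0
        have := hP f hf
        rw [h0, mul_zero, mul_zero] at this
        exact lt_irrefl 0 this
      have hP' : ∀ f : Fin d → Fin n, StrictMono f →
          0 < ηr * (minor Wt f * minor W f) := by
        intro f hf
        rw [mul_comm (minor Wt f)]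
        exact hP f hf
      constructor
      · ext τ
        constructor
        · rintro ⟨x, hx, rfl⟩
          obtain ⟨y, hy, hyeq⟩ := Stmt17.sign_surj_aux hdn W Wt hUW hUWt ηr hη hP
            (Stmt17.supp x).card x le_rfl ((Stmt17.mem_ker_iff hkW).mp hx)
          exact ⟨y, (Stmt17.mem_ker_iff hkWt).mpr hy, hyeq⟩
        · rintro ⟨x, hx, rfl⟩
          obtain ⟨y, hy, hyeq⟩ := Stmt17.sign_surj_aux hdn Wt W hUWt hUW ηr hη hP'
            (Stmt17.supp x).card x le_rfl ((Stmt17.mem_ker_iff hkWt).mp hx)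
          exact ⟨y, (Stmt17.mem_ker_iff hkW).mpr hy, hyeq⟩
      · exact Stmt17.minsupp_iff_card hd1 hdn hS hW hkW hUW
end
end
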